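/- arXiv:2510.05642 — 8 statements merged into one kernel-verified Lean document; each statement's English description precedes it below -/
import Mathlib

section
/- Suppose the drift satisfies ∑_{i=-l}^{l} i·p(i) > 0 and that γ ∈ (0,1) satisfies f(γ) = 0. Then for every positive integer ξ, the probability that the walk ever reaches level −ξ or below satisfies ℙ(∃ n ≥ 1, X_n ≤ −ξ) ≤ 1/(γ^{−ξ−1} − γ^{−1} + 1). -/
open MeasureTheory ProbabilityTheory Finset

namespace RWAux


noncomputable def V (γ : ℝ) (x : ℤ) : ℝ :=
  if 0 ≤ x then γ ^ (x + 1) / (1 - γ) else γ ^ x / (1 - γ) - 1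

variable {γ : ℝ}

lemma geomA (h1 : γ ≠ 1) (i : ℕ) :
    ∑ j ∈ Icc 1 i, γ ^ j = (γ - γ ^ (i + 1)) / (1 - γ) := by
  have hd : (1:ℝ) - γ ≠ 0 := by intro h; apply h1; linarith
  induction i with
  | zero => simp
  | succ n ih =>
      rw [Finset.sum_Icc_succ_top (by omega), ih]
      field_simp
      ring

lemma geomB (h0 : 0 < γ) (h1 : γ < 1) (i : ℕ) :
    ∑ j ∈ Icc 1 i, γ ^ (-(j : ℤ)) = (γ ^ (-(i : ℤ)) - 1) / (1 - γ) := by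
  have hd : (1:ℝ) - γ ≠ 0 := by nlinarith
  have hγ : γ ≠ 0 := ne_of_gt h0
  induction i with
  | zero => simp
  | succ n ih =>
      rw [Finset.sum_Icc_succ_top (by omega), ih]
      have e1 : γ ^ (-((n:ℤ))) = γ ^ (-((n+1:ℕ) : ℤ)) * γ := by
        rw [← zpow_add_one₀ hγ]; norm_num
      rw [e1]
      field_simp
      ring



lemma Vp (h0 : 0 < γ) (h1 : γ < 1) (x : ℤ) (i : ℕ) :
    γ ^ x * ((γ - γ ^ (i + 1)) / (1 - γ)) ≤ V γ x - V γ (x + i) := by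
  have hγ : γ ≠ 0 := ne_of_gt h0
  have hd : (0:ℝ) < 1 - γ := by linarith
  have hd' : (1:ℝ) - γ ≠ 0 := ne_of_gt hd
  have ha : (0:ℝ) < γ ^ x := zpow_pos h0 x
  have hb : (0:ℝ) < γ ^ (i:ℕ) := pow_pos h0 i
  have hb1 : γ ^ (i:ℕ) ≤ 1 := pow_le_one₀ (le_of_lt h0) (le_of_lt h1)
  have e1 : γ ^ (x + 1) = γ ^ x * γ := zpow_add_one₀ hγ x
  have e2 : γ ^ (x + (i:ℤ)) = γ ^ x * γ ^ (i:ℕ) := by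
    rw [← zpow_natCast γ i, ← zpow_add₀ hγ]
  have e3 : γ ^ (x + (i:ℤ) + 1) = γ ^ x * γ ^ (i:ℕ) * γ := by
    rw [zpow_add_one₀ hγ, e2]
  have e4 : γ ^ (i + 1 : ℕ) = γ ^ (i:ℕ) * γ := pow_succ γ i
  by_cases hx : 0 ≤ x
  · have hxi : 0 ≤ x + (i:ℤ) := by omega
    rw [V, V, if_pos hx, if_pos hxi, e1, e3, e4]
    apply le_of_eq
    field_simp
  · by_cases hxi : 0 ≤ x + (i:ℤ)
    · have ha1 : (1:ℝ) ≤ γ ^ x := one_le_zpow_of_nonpos₀ h0 (le_of_lt h1) (by omega)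
      rw [V, V, if_neg hx, if_pos hxi, e3, e4, ← sub_nonneg]
      have : γ ^ x / (1 - γ) - 1 - γ ^ x * γ ^ (i:ℕ) * γ / (1 - γ)
            - γ ^ x * ((γ - γ ^ (i:ℕ) * γ) / (1 - γ)) = γ ^ x - 1 := by
        field_simp
        ring
      rw [this]; linarith
    · rw [V, V, if_neg hx, if_neg hxi, e2, e4, ← sub_nonneg]
      have : γ ^ x / (1 - γ) - 1 - (γ ^ x * γ ^ (i:ℕ) / (1 - γ) - 1)
            - γ ^ x * ((γ - γ ^ (i:ℕ) * γ) / (1 - γ)) = γ ^ x * (1 - γ ^ (i:ℕ)) := by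
        field_simp
        ring
      rw [this]
      nlinarith

lemma Vn (h0 : 0 < γ) (h1 : γ < 1) (x : ℤ) (i : ℕ) :
    V γ (x + -(i:ℤ)) - V γ x ≤ γ ^ x * ((γ ^ (-(i:ℤ)) - 1) / (1 - γ)) := by
  have hγ : γ ≠ 0 := ne_of_gt h0
  have hd : (0:ℝ) < 1 - γ := by linarith
  have hd' : (1:ℝ) - γ ≠ 0 := ne_of_gt hd
  have ha : (0:ℝ) < γ ^ x := zpow_pos h0 x
  have hb : (0:ℝ) < γ ^ (-(i:ℤ)) := zpow_pos h0 _
  have hb1 : (1:ℝ) ≤ γ ^ (-(i:ℤ)) := one_le_zpow_of_nonpos₀ h0 (le_of_lt h1) (by omega)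
  have e1 : γ ^ (x + 1) = γ ^ x * γ := zpow_add_one₀ hγ x
  have e2 : γ ^ (x + -(i:ℤ)) = γ ^ x * γ ^ (-(i:ℤ)) := by rw [← zpow_add₀ hγ]
  have e3 : γ ^ (x + -(i:ℤ) + 1) = γ ^ x * γ ^ (-(i:ℤ)) * γ := by
    rw [zpow_add_one₀ hγ, e2]
  by_cases hxi : 0 ≤ x + -(i:ℤ)
  · have hx : 0 ≤ x := by omega
    have ha1 : γ ^ x ≤ 1 := zpow_le_one₀ h0 (le_of_lt h1) hx
    rw [V, V, if_pos hx, if_pos hxi, e1, e3, ← sub_nonneg]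
    have : γ ^ x * ((γ ^ (-(i:ℤ)) - 1) / (1 - γ))
          - (γ ^ x * γ ^ (-(i:ℤ)) * γ / (1 - γ) - γ ^ x * γ / (1 - γ))
          = γ ^ x * (γ ^ (-(i:ℤ)) - 1) := by
      field_simp
    rw [this]
    nlinarith
  · by_cases hx : 0 ≤ x
    · have ha1 : γ ^ x ≤ 1 := zpow_le_one₀ h0 (le_of_lt h1) hx
      rw [V, V, if_pos hx, if_neg hxi, e1, e2, ← sub_nonneg]
      have : γ ^ x * ((γ ^ (-(i:ℤ)) - 1) / (1 - γ))
            - (γ ^ x * γ ^ (-(i:ℤ)) / (1 - γ) - 1 - γ ^ x * γ / (1 - γ))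
            = 1 - γ ^ x := by
        field_simp
        ring
      rw [this]; linarith
    · rw [V, V, if_neg hx, if_neg hxi, e2, ← sub_nonneg]
      have : γ ^ x * ((γ ^ (-(i:ℤ)) - 1) / (1 - γ))
            - (γ ^ x * γ ^ (-(i:ℤ)) / (1 - γ) - 1 - (γ ^ x / (1 - γ) - 1)) = 0 := by
        field_simp
        ring
      rw [this]

lemma split (l : ℕ) (h : ℤ → ℝ) :
    ∑ i ∈ Icc (-(l:ℤ)) (l:ℤ), h i
      = h 0 + (∑ i ∈ Icc 1 l, h (i:ℤ)) + ∑ i ∈ Icc 1 l, h (-(i:ℤ)) := by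
  induction l with
  | zero => simp
  | succ n ih =>
      have hset : Icc (-((n+1:ℕ)):ℤ) ((n+1:ℕ):ℤ)
          = insert (-((n+1:ℕ)):ℤ) (insert (((n+1:ℕ)):ℤ) (Icc (-(n:ℤ)) (n:ℤ))) := by
        ext a
        simp only [mem_Icc, mem_insert]
        push_cast
        omega
      rw [hset, Finset.sum_insert, Finset.sum_insert, ih,
        Finset.sum_Icc_succ_top (by omega : 1 ≤ n + 1) (fun i : ℕ => h (i:ℤ)),
        Finset.sum_Icc_succ_top (by omega : 1 ≤ n + 1) (fun i : ℕ => h (-(i:ℤ)))]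
      · ring
      · simp only [mem_Icc]; push_cast; omega
      · simp only [mem_insert, mem_Icc]; push_cast; omega

lemma key (h0 : 0 < γ) (h1 : γ < 1) (l : ℕ) (p : ℤ → ℝ)
    (hp_nonneg : ∀ i, 0 ≤ p i)
    (hp_sum : ∑ i ∈ Icc (-(l:ℤ)) (l:ℤ), p i = 1)
    (hroot : (∑ i ∈ Icc 1 l, (∑ j ∈ Icc 1 i, γ ^ j) * p (i:ℤ))
           = ∑ i ∈ Icc 1 l, (∑ j ∈ Icc 1 i, γ ^ (-(j:ℤ))) * p (-(i:ℤ)))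
    (x : ℤ) :
    ∑ i ∈ Icc (-(l:ℤ)) (l:ℤ), V γ (x + i) * p i ≤ V γ x := by
  have hroot' : (∑ i ∈ Icc 1 l, ((γ - γ ^ (i+1)) / (1-γ)) * p (i:ℤ))
      = ∑ i ∈ Icc 1 l, ((γ ^ (-(i:ℤ)) - 1) / (1-γ)) * p (-(i:ℤ)) := by
    calc (∑ i ∈ Icc 1 l, ((γ - γ ^ (i+1)) / (1-γ)) * p (i:ℤ))
        = ∑ i ∈ Icc 1 l, (∑ j ∈ Icc 1 i, γ ^ j) * p (i:ℤ) := by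
          refine Finset.sum_congr rfl fun i _ => ?_
          rw [geomA (ne_of_lt h1)]
      _ = ∑ i ∈ Icc 1 l, (∑ j ∈ Icc 1 i, γ ^ (-(j:ℤ))) * p (-(i:ℤ)) := hroot
      _ = _ := by
          refine Finset.sum_congr rfl fun i _ => ?_
          rw [geomB h0 h1]
  have hone : p 0 + (∑ i ∈ Icc 1 l, p (i:ℤ)) + ∑ i ∈ Icc 1 l, p (-(i:ℤ)) = 1 := by
    rw [← split l p]; exact hp_sum
  rw [split l (fun i => V γ (x + i) * p i)]
  have hVx : V γ x
      = V γ x * p 0 + (∑ i ∈ Icc 1 l, V γ x * p (i:ℤ))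
        + ∑ i ∈ Icc 1 l, V γ x * p (-(i:ℤ)) := by
    rw [← Finset.mul_sum, ← Finset.mul_sum, ← mul_add, ← mul_add, hone, mul_one]
  rw [hVx, add_zero]
  have key1 : (∑ i ∈ Icc 1 l, V γ (x + (i:ℤ)) * p (i:ℤ))
      ≤ (∑ i ∈ Icc 1 l, V γ x * p (i:ℤ))
        - γ ^ x * ∑ i ∈ Icc 1 l, ((γ - γ ^ (i+1)) / (1-γ)) * p (i:ℤ) := by
    rw [Finset.mul_sum, ← Finset.sum_sub_distrib]
    refine Finset.sum_le_sum fun i _ => ?_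
    have h := mul_le_mul_of_nonneg_right (Vp h0 h1 x i) (hp_nonneg (i:ℤ))
    nlinarith [h]
  have key2 : (∑ i ∈ Icc 1 l, V γ (x + -(i:ℤ)) * p (-(i:ℤ)))
      ≤ (∑ i ∈ Icc 1 l, V γ x * p (-(i:ℤ)))
        + γ ^ x * ∑ i ∈ Icc 1 l, ((γ ^ (-(i:ℤ)) - 1) / (1-γ)) * p (-(i:ℤ)) := by
    rw [Finset.mul_sum, ← Finset.sum_add_distrib]
    refine Finset.sum_le_sum fun i _ => ?_
    have h := mul_le_mul_of_nonneg_right (Vn h0 h1 x i) (hp_nonneg (-(i:ℤ)))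
    nlinarith [h]
  rw [hroot'] at key1
  linarith [key1, key2]


def F (c : ℤ) : ℕ → (ℕ → ℤ) → ℤ
  | 0 => fun _ => 0
  | k + 1 => fun s => if F c k s ≤ c then F c k s else F c k s + s k

lemma F_succ (c : ℤ) (k : ℕ) (s : ℕ → ℤ) :
    F c (k + 1) s = if F c k s ≤ c then F c k s else F c k s + s k := rfl

lemma F_congr (c : ℤ) : ∀ (k : ℕ) (s s' : ℕ → ℤ), (∀ j, j < k → s j = s' j) → F c k s = F c k s'
  | 0, _, _, _ => rfl
  | k + 1, s, s', h => by
      have ih := F_congr c k s s' (fun j hj => h j (by omega))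
      rw [F_succ, F_succ, ih, h k (by omega)]

lemma measurable_int {α : Type*} [MeasurableSpace α] {f : α → ℤ} (hf : Measurable f)
    (S : Set ℤ) : MeasurableSet (f ⁻¹' S) :=
  hf (Set.to_countable S).measurableSet

lemma F_meas (c : ℤ) : ∀ k, Measurable (F c k)
  | 0 => measurable_const
  | k + 1 => by
      have ih := F_meas c k
      have hs : Measurable fun s : ℕ → ℤ => s k := measurable_pi_apply k
      have hcond : MeasurableSet {s : ℕ → ℤ | F c k s ≤ c} :=
        measurable_int ih {z | z ≤ c}
      exact Measurable.ite hcond ih (ih.add hs)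


end RWAux


/-- **Hitting probability bound for a positively drifted random walk.**
Let `p` be a probability mass function on `ℤ` supported on `[-l, l]`, let `step k` be i.i.d.
steps with law `p`, and let `X n = step 0 + ⋯ + step (n-1)` be the associated random walk
started at `0`.  If the drift `∑ i, i * p i` is positive and `γ ∈ (0,1)` is a root of
`f(γ) = ∑_{i=1}^l (∑_{j=1}^i γ^j) p(i) − ∑_{i=1}^l (∑_{j=1}^i γ^{−j}) p(−i)`, then for every
positive integer `ξ`, the probability that the walk ever reaches level `−ξ` or below is at most
`1 / (γ^{−ξ−1} − γ^{−1} + 1)`. -/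
theorem random_walk_hitting_probability_bound
    {Ω : Type*} [MeasurableSpace Ω] (μ : Measure Ω) [IsProbabilityMeasure μ]
    (l : ℕ) (hl : 0 < l)
    (p : ℤ → ℝ)
    (hp_nonneg : ∀ i, 0 ≤ p i)
    (hp_sum : ∑ i ∈ Finset.Icc (-(l : ℤ)) (l : ℤ), p i = 1)
    (hp_supp : ∀ i : ℤ, (l : ℤ) < |i| → p i = 0)
    (step : ℕ → Ω → ℤ)
    (hmeas : ∀ k, Measurable (step k))
    (hindep : iIndepFun step μ)
    (hlaw : ∀ k i, μ {ω | step k ω = i} = ENNReal.ofReal (p i))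
    (X : ℕ → Ω → ℤ)
    (hX : ∀ n ω, X n ω = ∑ k ∈ Finset.range n, step k ω)
    (hdrift : 0 < ∑ i ∈ Finset.Icc (-(l : ℤ)) (l : ℤ), (i : ℝ) * p i)
    (f : ℝ → ℝ)
    (hf : ∀ g : ℝ, 0 < g →
      f g = (∑ i ∈ Finset.Icc 1 l, (∑ j ∈ Finset.Icc 1 i, g ^ j) * p (i : ℤ))
          - (∑ i ∈ Finset.Icc 1 l, (∑ j ∈ Finset.Icc 1 i, g ^ (-(j : ℤ))) * p (-(i : ℤ))))
    (γ : ℝ) (hγ : γ ∈ Set.Ioo (0 : ℝ) 1) (hroot : f γ = 0)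
    (ξ : ℕ) (hξ : 0 < ξ) :
    μ {ω | ∃ n ≥ 1, X n ω ≤ -(ξ : ℤ)}
      ≤ ENNReal.ofReal (1 / (γ ^ (-(ξ : ℤ) - 1) - γ⁻¹ + 1)) := by
  obtain ⟨hγ0, hγ1⟩ := hγ
  have hγne : γ ≠ 0 := ne_of_gt hγ0
  have hd : (0:ℝ) < 1 - γ := by linarith
  set c : ℤ := -(ξ : ℤ) with hc
  have hcneg : c < 0 := by omega
  have hroot' : (∑ i ∈ Finset.Icc 1 l, (∑ j ∈ Finset.Icc 1 i, γ ^ j) * p (i : ℤ))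
      = ∑ i ∈ Finset.Icc 1 l, (∑ j ∈ Finset.Icc 1 i, γ ^ (-(j : ℤ))) * p (-(i : ℤ)) := by
    have h := hf γ hγ0
    rw [hroot] at h
    linarith
  have hkey := RWAux.key hγ0 hγ1 l p hp_nonneg hp_sum hroot'
  set Y : ℕ → Ω → ℤ := fun k ω => RWAux.F c k (fun j => step j ω) with hYdef
  have hYmeas : ∀ k, Measurable (Y k) := fun k =>
    (RWAux.F_meas c k).comp (measurable_pi_lambda _ fun j => hmeas j)
  have hEvent : ∀ k (x : ℤ), MeasurableSet {ω | Y k ω = x} := fun k x =>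
    RWAux.measurable_int (hYmeas k) {x}
  have hY0 : ∀ ω, Y 0 ω = 0 := fun ω => rfl
  have hYsucc : ∀ k ω, Y (k+1) ω = if Y k ω ≤ c then Y k ω else Y k ω + step k ω :=
    fun k ω => rfl
  have hB0 : ∀ k ω, Y k ω ≤ c → Y (k+1) ω ≤ c := by
    intro k ω h
    rw [hYsucc, if_pos h]
    exact h
  have hB1 : ∀ n ω, (∀ m, 1 ≤ m → m ≤ n → c < X m ω) → Y n ω = X n ω := by
    intro n
    induction n with
    | zero => intro ω _; rw [hY0, hX]; simp
    | succ n ih =>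
        intro ω h
        have hYn : Y n ω = X n ω := ih ω (fun m h1 h2 => h m h1 (by omega))
        have hgt : c < Y n ω := by
          rcases Nat.eq_zero_or_pos n with h0 | h0
          · subst h0
            rw [hYn, hX]
            simpa using hcneg
          · rw [hYn]; exact h n h0 (by omega)
        rw [hYsucc, if_neg (not_le.mpr hgt), hYn, hX, hX, Finset.sum_range_succ]
  have hB2 : ∀ n ω, (Y n ω ≤ c ↔ ∃ m, 1 ≤ m ∧ m ≤ n ∧ X m ω ≤ c) := by
    intro n
    induction n with
    | zero =>
        intro ω
        rw [hY0]
        constructor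
        · intro h; exact absurd h (by omega)
        · rintro ⟨m, h1, h2, _⟩; omega
    | succ n ih =>
        intro ω
        by_cases hYn : Y n ω ≤ c
        · constructor
          · intro _
            obtain ⟨m, h1, h2, h3⟩ := (ih ω).mp hYn
            exact ⟨m, h1, by omega, h3⟩
          · intro _
            exact hB0 n ω hYn
        · have hall : ∀ m, 1 ≤ m → m ≤ n → c < X m ω := by
            intro m h1 h2
            by_contra hcon
            exact hYn ((ih ω).mpr ⟨m, h1, h2, not_lt.mp hcon⟩)
          have hYX : Y (n+1) ω = X (n+1) ω := by
            rw [hYsucc, if_neg hYn, hB1 n ω hall, hX, hX, Finset.sum_range_succ]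
          rw [hYX]
          constructor
          · intro h
            exact ⟨n+1, by omega, le_refl _, h⟩
          · rintro ⟨m, h1, h2, h3⟩
            rcases Nat.lt_or_ge m (n+1) with hm | hm
            · exact absurd h3 (not_le.mpr (hall m h1 (by omega)))
            · have hmn : m = n + 1 := by omega
              rw [hmn] at h3
              exact h3
  set Vq : ℤ → ENNReal := fun x => ENNReal.ofReal (RWAux.V γ x) with hVqdef
  have hVpos : ∀ x : ℤ, 0 < RWAux.V γ x := by
    intro x
    rw [RWAux.V]
    split_ifs with hx
    · exact div_pos (zpow_pos hγ0 _) hd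
    · have hx1 : (1:ℝ) ≤ γ ^ x := one_le_zpow_of_nonpos₀ hγ0 (le_of_lt hγ1) (by omega)
      rw [sub_pos, lt_div_iff₀ hd, one_mul]
      linarith
  have hYind : ∀ k, IndepFun (Y k) (step k) μ := by
    intro k
    have hdisj : Disjoint (Finset.range k) ({k} : Finset ℕ) := by
      simp only [Finset.disjoint_left, Finset.mem_range, Finset.mem_singleton]
      omega
    have hbase := hindep.indepFun_finset (Finset.range k) {k} hdisj hmeas
    have hg1m : Measurable (fun t : ((Finset.range k : Finset ℕ) : Type) → ℤ =>
        RWAux.F c k (fun j => if h : j ∈ Finset.range k then t ⟨j, h⟩ else 0)) := by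
      apply (RWAux.F_meas c k).comp
      apply measurable_pi_lambda
      intro j
      by_cases h : j ∈ Finset.range k
      · simpa [h] using measurable_pi_apply (⟨j, h⟩ : (Finset.range k : Finset ℕ))
      · simpa [h] using (measurable_const : Measurable fun _ : ((Finset.range k : Finset ℕ) : Type) → ℤ => (0:ℤ))
    have hg2m : Measurable (fun t : ((({k} : Finset ℕ)) : Type) → ℤ =>
        t ⟨k, Finset.mem_singleton_self k⟩) := measurable_pi_apply _
    have hcomp := hbase.comp hg1m hg2m
    have e1 : ((fun t : ((Finset.range k : Finset ℕ) : Type) → ℤ =>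
          RWAux.F c k (fun j => if h : j ∈ Finset.range k then t ⟨j, h⟩ else 0))
        ∘ (fun a (i : (Finset.range k : Finset ℕ)) => step i a)) = Y k := by
      funext a
      simp only [Function.comp]
      apply RWAux.F_congr
      intro j hj
      rw [dif_pos (Finset.mem_range.mpr hj)]
    have e2 : ((fun t : ((({k} : Finset ℕ)) : Type) → ℤ => t ⟨k, Finset.mem_singleton_self k⟩)
        ∘ (fun a (i : (({k} : Finset ℕ) : Finset ℕ)) => step i a)) = step k := rfl
    rw [e1, e2] at hcomp
    exact hcomp
  have hprod : ∀ k (x i : ℤ), μ ({ω | Y k ω = x} ∩ {ω | step k ω = i})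
      = μ {ω | Y k ω = x} * ENNReal.ofReal (p i) := by
    intro k x i
    rw [← hlaw k i]
    exact (hYind k).measure_inter_preimage_eq_mul ({x} : Set ℤ) ({i} : Set ℤ)
      ((Set.to_countable ({x} : Set ℤ)).measurableSet)
      ((Set.to_countable ({i} : Set ℤ)).measurableSet)
  set S : ℕ → ENNReal := fun k => ∑' x : ℤ, Vq x * μ {ω | Y k ω = x} with hSdef
  have hS0 : S 0 = Vq 0 := by
    have hz : ∀ b : ℤ, b ≠ 0 → Vq b * μ {ω | Y 0 ω = b} = 0 := by
      intro b hb
      have : {ω | Y 0 ω = b} = ∅ := by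
        apply Set.eq_empty_iff_forall_notMem.mpr
        intro ω h
        rw [Set.mem_setOf_eq, hY0] at h
        exact hb h.symm
      rw [this, measure_empty, mul_zero]
    rw [show S 0 = ∑' x : ℤ, Vq x * μ {ω | Y 0 ω = x} from rfl, tsum_eq_single 0 hz]
    have : {ω | Y 0 ω = 0} = Set.univ := by
      ext ω; simp [hY0]
    rw [this, measure_univ, mul_one]
  have hdecomp : ∀ k (x : ℤ), μ {ω | Y (k+1) ω = x}
      = ∑' x' : ℤ, μ ({ω | Y k ω = x'} ∩ {ω | Y (k+1) ω = x}) := by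
    intro k x
    have hU : {ω | Y (k+1) ω = x} = ⋃ x' : ℤ, ({ω | Y k ω = x'} ∩ {ω | Y (k+1) ω = x}) := by
      ext ω
      simp only [Set.mem_setOf_eq, Set.mem_iUnion, Set.mem_inter_iff]
      exact ⟨fun h => ⟨Y k ω, rfl, h⟩, fun ⟨_, _, h⟩ => h⟩
    have hdisj : Pairwise (Function.onFun Disjoint
        (fun x' : ℤ => {ω | Y k ω = x'} ∩ {ω | Y (k+1) ω = x})) := by
      intro a b hab
      apply Set.disjoint_left.mpr
      rintro ω ⟨h1, _⟩ ⟨h2, _⟩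
      rw [Set.mem_setOf_eq] at h1 h2
      exact hab (by rw [← h1, ← h2])
    calc μ {ω | Y (k+1) ω = x}
        = μ (⋃ x' : ℤ, ({ω | Y k ω = x'} ∩ {ω | Y (k+1) ω = x})) := by rw [← hU]
      _ = ∑' x' : ℤ, μ ({ω | Y k ω = x'} ∩ {ω | Y (k+1) ω = x}) :=
          measure_iUnion hdisj (fun x' => (hEvent k x').inter (hEvent (k+1) x))
  have hcase : ∀ k (x' : ℤ),
      (∑' x : ℤ, Vq x * μ ({ω | Y k ω = x'} ∩ {ω | Y (k+1) ω = x}))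
        ≤ Vq x' * μ {ω | Y k ω = x'} := by
    intro k x'
    by_cases hx' : x' ≤ c
    · apply le_of_eq
      have hz : ∀ b : ℤ, b ≠ x' →
          Vq b * μ ({ω | Y k ω = x'} ∩ {ω | Y (k+1) ω = b}) = 0 := by
        intro b hb
        have : {ω | Y k ω = x'} ∩ {ω | Y (k+1) ω = b} = ∅ := by
          apply Set.eq_empty_iff_forall_notMem.mpr
          rintro ω ⟨h1, h2⟩
          rw [Set.mem_setOf_eq] at h1 h2
          apply hb
          rw [← h2, hYsucc, h1, if_pos hx']
        rw [this, measure_empty, mul_zero]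
      rw [tsum_eq_single x' hz]
      have : {ω | Y k ω = x'} ∩ {ω | Y (k+1) ω = x'} = {ω | Y k ω = x'} := by
        ext ω
        simp only [Set.mem_inter_iff, Set.mem_setOf_eq, and_iff_left_iff_imp]
        intro h
        rw [hYsucc, h, if_pos hx']
      rw [this]
    · have hset : ∀ x : ℤ, {ω | Y k ω = x'} ∩ {ω | Y (k+1) ω = x}
          = {ω | Y k ω = x'} ∩ {ω | step k ω = x - x'} := by
        intro x
        ext ω
        simp only [Set.mem_inter_iff, Set.mem_setOf_eq]
        constructor
        · rintro ⟨h1, h2⟩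
          refine ⟨h1, ?_⟩
          rw [hYsucc, h1, if_neg hx'] at h2
          omega
        · rintro ⟨h1, h2⟩
          refine ⟨h1, ?_⟩
          rw [hYsucc, h1, if_neg hx']
          omega
      calc (∑' x : ℤ, Vq x * μ ({ω | Y k ω = x'} ∩ {ω | Y (k+1) ω = x}))
          = ∑' x : ℤ, μ {ω | Y k ω = x'} * (Vq x * ENNReal.ofReal (p (x - x'))) := by
            apply tsum_congr
            intro x
            rw [hset x, hprod k x' (x - x')]
            ring
        _ = μ {ω | Y k ω = x'} * ∑' x : ℤ, Vq x * ENNReal.ofReal (p (x - x')) :=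
            ENNReal.tsum_mul_left
        _ = μ {ω | Y k ω = x'} * ∑' i : ℤ, Vq (x' + i) * ENNReal.ofReal (p i) := by
            congr 1
            rw [← Equiv.tsum_eq (Equiv.addLeft x')
              (fun x : ℤ => Vq x * ENNReal.ofReal (p (x - x')))]
            apply tsum_congr
            intro i
            simp [add_sub_cancel_left]
        _ ≤ μ {ω | Y k ω = x'} * Vq x' := by
            apply mul_le_mul_right
            calc (∑' i : ℤ, Vq (x' + i) * ENNReal.ofReal (p i))
                = ∑ i ∈ Finset.Icc (-(l:ℤ)) (l:ℤ), Vq (x' + i) * ENNReal.ofReal (p i) := by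
                  apply tsum_eq_sum
                  intro b hb
                  have hbl : (l:ℤ) < |b| := by
                    simp only [Finset.mem_Icc, not_and_or, not_le] at hb
                    rcases hb with h | h
                    · rw [abs_of_neg (by omega)]; omega
                    · rw [abs_of_pos (by omega)]; omega
                  rw [hp_supp b hbl, ENNReal.ofReal_zero, mul_zero]
              _ = ENNReal.ofReal (∑ i ∈ Finset.Icc (-(l:ℤ)) (l:ℤ), RWAux.V γ (x' + i) * p i) := by
                  rw [ENNReal.ofReal_sum_of_nonneg
                    (fun i _ => mul_nonneg (le_of_lt (hVpos _)) (hp_nonneg i))]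
                  apply Finset.sum_congr rfl
                  intro i _
                  rw [ENNReal.ofReal_mul (le_of_lt (hVpos (x' + i)))]
              _ ≤ Vq x' := ENNReal.ofReal_le_ofReal (hkey x')
        _ = Vq x' * μ {ω | Y k ω = x'} := mul_comm _ _
  have hstep : ∀ k, S (k+1) ≤ S k := by
    intro k
    calc S (k+1)
        = ∑' x : ℤ, ∑' x' : ℤ, Vq x * μ ({ω | Y k ω = x'} ∩ {ω | Y (k+1) ω = x}) := by
          rw [hSdef]
          apply tsum_congr
          intro x
          rw [hdecomp k x, ENNReal.tsum_mul_left]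
      _ = ∑' x' : ℤ, ∑' x : ℤ, Vq x * μ ({ω | Y k ω = x'} ∩ {ω | Y (k+1) ω = x}) :=
          ENNReal.tsum_comm
      _ ≤ ∑' x' : ℤ, Vq x' * μ {ω | Y k ω = x'} := ENNReal.tsum_le_tsum (hcase k)
      _ = S k := rfl
  have hSle : ∀ n, S n ≤ Vq 0 := by
    intro n
    induction n with
    | zero => rw [hS0]
    | succ n ih => exact le_trans (hstep n) ih
  have hVanti : ∀ x : ℤ, x ≤ c → RWAux.V γ c ≤ RWAux.V γ x := by
    intro x hx
    rw [RWAux.V, RWAux.V, if_neg (by omega), if_neg (by omega)]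
    have hz : γ ^ c ≤ γ ^ x := zpow_le_zpow_right_of_le_one₀ hγ0 (le_of_lt hγ1) hx
    have h2 : γ ^ c / (1 - γ) ≤ γ ^ x / (1 - γ) := by gcongr
    linarith
  have hBn : ∀ n, μ {ω | Y n ω ≤ c}
      ≤ ENNReal.ofReal (1 / (γ ^ (-(ξ : ℤ) - 1) - γ⁻¹ + 1)) := by
    intro n
    have hpart : {ω | Y n ω ≤ c} = ⋃ x : {x : ℤ // x ≤ c}, {ω | Y n ω = (x:ℤ)} := by
      ext ω
      simp only [Set.mem_setOf_eq, Set.mem_iUnion]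
      exact ⟨fun h => ⟨⟨Y n ω, h⟩, rfl⟩, fun ⟨x, hx⟩ => hx ▸ x.2⟩
    have hμpart : μ {ω | Y n ω ≤ c} = ∑' x : {x : ℤ // x ≤ c}, μ {ω | Y n ω = (x:ℤ)} := by
      have hdisj : Pairwise (Function.onFun Disjoint
          (fun x : {x : ℤ // x ≤ c} => {ω | Y n ω = (x:ℤ)})) := by
        intro a b hab
        apply Set.disjoint_left.mpr
        intro ω h1 h2
        rw [Set.mem_setOf_eq] at h1 h2
        exact hab (Subtype.ext (by rw [← h1, ← h2]))
      rw [hpart, measure_iUnion hdisj (fun x => hEvent n (x:ℤ))]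
    have hVcS : Vq c * μ {ω | Y n ω ≤ c} ≤ S n := by
      rw [hμpart, ← ENNReal.tsum_mul_left]
      calc (∑' x : {x : ℤ // x ≤ c}, Vq c * μ {ω | Y n ω = (x:ℤ)})
          ≤ ∑' x : {x : ℤ // x ≤ c}, Vq (x:ℤ) * μ {ω | Y n ω = (x:ℤ)} :=
            ENNReal.tsum_le_tsum (fun x =>
              mul_le_mul_left (ENNReal.ofReal_le_ofReal (hVanti x x.2)) _)
        _ ≤ S n := ENNReal.tsum_comp_le_tsum_of_injective Subtype.val_injective
              (fun x : ℤ => Vq x * μ {ω | Y n ω = x})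
    have h1 : Vq c * μ {ω | Y n ω ≤ c} ≤ Vq 0 := le_trans hVcS (hSle n)
    have hVcne : Vq c ≠ 0 := ne_of_gt (ENNReal.ofReal_pos.mpr (hVpos c))
    have hVctop : Vq c ≠ ⊤ := ENNReal.ofReal_ne_top
    have h2 : μ {ω | Y n ω ≤ c} ≤ Vq 0 / Vq c := by
      rw [ENNReal.le_div_iff_mul_le (Or.inl hVcne) (Or.inl hVctop)]
      rwa [mul_comm]
    refine le_trans h2 ?_
    rw [hVqdef]
    rw [← ENNReal.ofReal_div_of_pos (hVpos c)]
    apply ENNReal.ofReal_le_ofReal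
    apply le_of_eq
    have hV0 : RWAux.V γ 0 = γ / (1 - γ) := by
      rw [RWAux.V, if_pos (le_refl (0:ℤ))]
      norm_num
    have hVc : RWAux.V γ c = γ ^ (-(ξ:ℤ)) / (1 - γ) - 1 := by
      rw [RWAux.V, if_neg (by omega), hc]
    have hu1 : (1:ℝ) ≤ γ ^ (-(ξ:ℤ)) := one_le_zpow_of_nonpos₀ hγ0 (le_of_lt hγ1) (by omega)
    have hden : (0:ℝ) < γ ^ (-(ξ:ℤ)) - 1 + γ := by linarith
    have hVcpos := hVpos c
    rw [hVc] at hVcpos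
    have he : γ ^ (-(ξ:ℤ) - 1) = γ ^ (-(ξ:ℤ)) * γ⁻¹ := by
      rw [zpow_sub₀ hγne, zpow_one, div_eq_mul_inv]
    rw [hV0, hVc, he]
    have hne1 : γ ^ (-(ξ:ℤ)) / (1 - γ) - 1 ≠ 0 := ne_of_gt hVcpos
    have hne2 : γ ^ (-(ξ:ℤ)) * γ⁻¹ - γ⁻¹ + 1 ≠ 0 := by
      have : γ ^ (-(ξ:ℤ)) * γ⁻¹ - γ⁻¹ + 1 = (γ ^ (-(ξ:ℤ)) - 1 + γ) / γ := by
        field_simp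
      rw [this]
      positivity
    have e3 : γ ^ (-(ξ:ℤ)) / (1 - γ) - 1 = (γ ^ (-(ξ:ℤ)) - 1 + γ) / (1 - γ) := by
      field_simp
      ring
    have e4 : γ ^ (-(ξ:ℤ)) * γ⁻¹ - γ⁻¹ + 1 = (γ ^ (-(ξ:ℤ)) - 1 + γ) / γ := by
      field_simp
    rw [e3, e4, one_div_div, div_div_div_cancel_right₀ (ne_of_gt hd)]
  have htarget : {ω | ∃ n ≥ 1, X n ω ≤ c} = ⋃ n : ℕ, {ω | Y n ω ≤ c} := by
    ext ω
    simp only [Set.mem_setOf_eq, Set.mem_iUnion, ge_iff_le]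
    constructor
    · rintro ⟨n, h1, h2⟩
      exact ⟨n, (hB2 n ω).mpr ⟨n, h1, le_refl _, h2⟩⟩
    · rintro ⟨n, h⟩
      obtain ⟨m, h1, _, h3⟩ := (hB2 n ω).mp h
      exact ⟨m, h1, h3⟩
  rw [htarget]
  have hmono : Monotone (fun n => {ω | Y n ω ≤ c}) :=
    monotone_nat_of_le_succ (fun n ω h => hB0 n ω h)
  rw [Directed.measure_iUnion (hmono.directed_le)]
  exact iSup_le hBn
end

section
/- Suppose the drift satisfies ∑_{i=-l}^{l} i·p(i) > 0 and that γ ∈ (0,1) satisfies f(γ) = 0. Then for every positive integer ξ, the probability that the walk ever reaches level −ξ or below decays exponentially: ℙ(∃ n ≥ 1, X_n ≤ −ξ) < γ^{ξ}. -/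
open MeasureTheory ProbabilityTheory Finset

lemma rw_split_sum (l : ℕ) (h : ℤ → ℝ) :
    ∑ i ∈ Finset.Icc (-(l : ℤ)) (l : ℤ), h i
      = (∑ i ∈ Finset.Icc 1 l, h (-(i : ℤ))) + h 0 + ∑ i ∈ Finset.Icc 1 l, h (i : ℤ) := by
  induction l with
  | zero => simp
  | succ n ih =>
    have h1 : Finset.Icc (-(n + 1 : ℤ)) (n + 1 : ℤ)
        = insert (-(n + 1 : ℤ)) (insert ((n + 1 : ℤ)) (Finset.Icc (-(n : ℤ)) (n : ℤ))) := by
      ext x; simp [Finset.mem_Icc]; omega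
    have h2 : Finset.Icc 1 (n + 1) = insert (n + 1) (Finset.Icc 1 n) := by
      ext x; simp [Finset.mem_Icc]; omega
    have hn1 : (-(n + 1 : ℤ)) ∉ insert ((n + 1 : ℤ)) (Finset.Icc (-(n : ℤ)) (n : ℤ)) := by
      simp [Finset.mem_Icc]; omega
    have hn2 : ((n + 1 : ℤ)) ∉ Finset.Icc (-(n : ℤ)) (n : ℤ) := by
      simp [Finset.mem_Icc]
    have hn3 : (n + 1) ∉ Finset.Icc 1 n := by simp
    push_cast
    rw [h1, Finset.sum_insert hn1, Finset.sum_insert hn2, ih, h2,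
      Finset.sum_insert hn3, Finset.sum_insert hn3]
    push_cast; ring

lemma rw_geom_pos (γ : ℝ) (i : ℕ) :
    (1 - γ) * ∑ j ∈ Finset.Icc 1 i, γ ^ j = γ - γ ^ (i + 1) := by
  induction i with
  | zero => simp
  | succ n ih =>
    rw [show Finset.Icc 1 (n + 1) = insert (n + 1) (Finset.Icc 1 n) by
        ext x; simp [Finset.mem_Icc]; omega,
      Finset.sum_insert (by simp)]
    rw [mul_add, ih]; ring

lemma rw_geom_neg (γ : ℝ) (hγ : γ ≠ 0) (i : ℕ) :
    (1 - γ) * ∑ j ∈ Finset.Icc 1 i, γ ^ (-(j : ℤ)) = γ ^ (-(i : ℤ)) - 1 := by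
  induction i with
  | zero => simp
  | succ n ih =>
    rw [show Finset.Icc 1 (n + 1) = insert (n + 1) (Finset.Icc 1 n) by
        ext x; simp [Finset.mem_Icc]; omega,
      Finset.sum_insert (by simp)]
    rw [mul_add, ih]
    have e1 : γ * γ ^ (-((n : ℤ) + 1)) = γ ^ (-(n : ℤ)) := by
      calc γ * γ ^ (-((n : ℤ) + 1)) = γ ^ (1 : ℤ) * γ ^ (-((n : ℤ) + 1)) := by rw [zpow_one]
        _ = γ ^ ((1 : ℤ) + -((n : ℤ) + 1)) := (zpow_add₀ hγ _ _).symm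
        _ = γ ^ (-(n : ℤ)) := by ring_nf
    push_cast
    have : (1 - γ) * γ ^ (-((n:ℤ) + 1)) = γ ^ (-((n:ℤ)+1)) - γ ^ (-(n:ℤ)) := by
      rw [sub_mul, one_mul, e1]
    rw [this]; ring_nf

lemma rw_r_lt_one (l : ℕ) (p : ℤ → ℝ)
    (hp_nonneg : ∀ i, 0 ≤ p i)
    (hp_sum : ∑ i ∈ Finset.Icc (-(l : ℤ)) (l : ℤ), p i = 1)
    (hdrift : 0 < ∑ i ∈ Finset.Icc (-(l : ℤ)) (l : ℤ), (i : ℝ) * p i)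
    (γ : ℝ) (hγ0 : 0 < γ) (hγ1 : γ < 1)
    (hroot' : (∑ i ∈ Finset.Icc 1 l, (∑ j ∈ Finset.Icc 1 i, γ ^ j) * p (i : ℤ))
      = ∑ i ∈ Finset.Icc 1 l, (∑ j ∈ Finset.Icc 1 i, γ ^ (-(j : ℤ))) * p (-(i : ℤ))) :
    ∑ i ∈ Finset.Icc (-(l : ℤ)) (l : ℤ), γ ^ i * p i < 1 := by
  have hγne : γ ≠ 0 := ne_of_gt hγ0
  have hstar : (∑ i ∈ Finset.Icc 1 l, (γ - γ ^ (i + 1)) * p (i : ℤ))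
      = ∑ i ∈ Finset.Icc 1 l, (γ ^ (-(i : ℤ)) - 1) * p (-(i : ℤ)) := by
    have := congrArg (fun x => (1 - γ) * x) hroot'
    simp only [Finset.mul_sum] at this
    calc (∑ i ∈ Finset.Icc 1 l, (γ - γ ^ (i + 1)) * p (i : ℤ))
        = ∑ i ∈ Finset.Icc 1 l, (1 - γ) * ((∑ j ∈ Finset.Icc 1 i, γ ^ j) * p (i : ℤ)) := by
          refine Finset.sum_congr rfl fun i _ => ?_
          rw [← mul_assoc, rw_geom_pos]
      _ = ∑ i ∈ Finset.Icc 1 l, (1 - γ) * ((∑ j ∈ Finset.Icc 1 i, γ ^ (-(j : ℤ))) * p (-(i : ℤ))) := this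
      _ = ∑ i ∈ Finset.Icc 1 l, (γ ^ (-(i : ℤ)) - 1) * p (-(i : ℤ)) := by
          refine Finset.sum_congr rfl fun i _ => ?_
          rw [← mul_assoc, rw_geom_neg γ hγne]
  have hsplit_r := rw_split_sum l (fun i => γ ^ i * p i)
  have hsplit_1 := rw_split_sum l p
  rw [hp_sum] at hsplit_1
  have hr_eq : ∑ i ∈ Finset.Icc (-(l : ℤ)) (l : ℤ), γ ^ i * p i
      = (∑ i ∈ Finset.Icc 1 l, γ ^ (-(i : ℤ)) * p (-(i : ℤ))) + p 0
        + ∑ i ∈ Finset.Icc 1 l, γ ^ i * p (i : ℤ) := by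
    rw [hsplit_r]
    simp only [zpow_natCast, zpow_zero, one_mul]
  have key : 1 - (∑ i ∈ Finset.Icc (-(l : ℤ)) (l : ℤ), γ ^ i * p i)
      = ∑ i ∈ Finset.Icc 1 l, ((1 - γ) * (1 - γ ^ i)) * p (i : ℤ) := by
    rw [hr_eq]
    nth_rewrite 1 [hsplit_1]
    have expand : ∑ i ∈ Finset.Icc 1 l, ((1 - γ) * (1 - γ ^ i)) * p (i : ℤ)
        = (∑ i ∈ Finset.Icc 1 l, (1 - γ ^ i) * p (i : ℤ))
          - ∑ i ∈ Finset.Icc 1 l, (γ - γ ^ (i + 1)) * p (i : ℤ) := by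
      rw [← Finset.sum_sub_distrib]
      refine Finset.sum_congr rfl fun i _ => ?_
      ring
    have e1 : ∑ i ∈ Finset.Icc 1 l, (1 - γ ^ i) * p (i:ℤ)
        = (∑ i ∈ Finset.Icc 1 l, p (i:ℤ)) - ∑ i ∈ Finset.Icc 1 l, γ ^ i * p (i:ℤ) := by
      rw [← Finset.sum_sub_distrib]
      exact Finset.sum_congr rfl fun i _ => by ring
    have e2 : ∑ i ∈ Finset.Icc 1 l, (γ ^ (-(i:ℤ)) - 1) * p (-(i:ℤ))
        = (∑ i ∈ Finset.Icc 1 l, γ ^ (-(i:ℤ)) * p (-(i:ℤ))) - ∑ i ∈ Finset.Icc 1 l, p (-(i:ℤ)) := by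
      rw [← Finset.sum_sub_distrib]
      exact Finset.sum_congr rfl fun i _ => by ring
    rw [expand, hstar, e1, e2]
    ring
  have hsplit_d := rw_split_sum l (fun i => (i : ℝ) * p i)
  have hPp_pos : 0 < ∑ i ∈ Finset.Icc 1 l, p (i : ℤ) := by
    by_contra hcon
    push_neg at hcon
    have hPp0 : ∑ i ∈ Finset.Icc 1 l, p (i : ℤ) = 0 :=
      le_antisymm hcon (Finset.sum_nonneg fun i _ => hp_nonneg _)
    have hall0 : ∀ i ∈ Finset.Icc 1 l, p (i : ℤ) = 0 := by
      intro i hi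
      exact (Finset.sum_eq_zero_iff_of_nonneg (fun j _ => hp_nonneg _)).mp hPp0 i hi
    have : ∑ i ∈ Finset.Icc (-(l : ℤ)) (l : ℤ), (i : ℝ) * p i ≤ 0 := by
      rw [hsplit_d]
      have t1 : (∑ i ∈ Finset.Icc 1 l, ((-(i:ℤ) : ℤ) : ℝ) * p (-(i:ℤ))) ≤ 0 := by
        refine Finset.sum_nonpos fun i hi => ?_
        have : ((-(i:ℤ) : ℤ) : ℝ) ≤ 0 := by
          push_cast
          simp only [neg_nonpos]
          exact Nat.cast_nonneg i
        exact mul_nonpos_of_nonpos_of_nonneg this (hp_nonneg _)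
      have t2 : (∑ i ∈ Finset.Icc 1 l, (((i:ℤ)) : ℝ) * p ((i:ℤ))) = 0 := by
        refine Finset.sum_eq_zero fun i hi => by rw [hall0 i hi, mul_zero]
      simp only [t2]
      simpa using t1
    linarith
  have hterm : ∀ i ∈ Finset.Icc 1 l,
      ((1 - γ) * (1 - γ)) * p (i : ℤ) ≤ ((1 - γ) * (1 - γ ^ i)) * p (i : ℤ) := by
    intro i hi
    have hi1 : 1 ≤ i := (Finset.mem_Icc.mp hi).1
    have : γ ^ i ≤ γ ^ 1 := pow_le_pow_of_le_one (le_of_lt hγ0) (le_of_lt hγ1) hi1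
    rw [pow_one] at this
    have h1γ : 0 ≤ 1 - γ := by linarith
    exact mul_le_mul_of_nonneg_right
      (mul_le_mul_of_nonneg_left (by linarith) h1γ) (hp_nonneg _)
  have hge : ((1 - γ) * (1 - γ)) * ∑ i ∈ Finset.Icc 1 l, p (i : ℤ)
      ≤ ∑ i ∈ Finset.Icc 1 l, ((1 - γ) * (1 - γ ^ i)) * p (i : ℤ) := by
    rw [Finset.mul_sum]
    exact Finset.sum_le_sum hterm
  have hpos : 0 < ((1 - γ) * (1 - γ)) * ∑ i ∈ Finset.Icc 1 l, p (i : ℤ) := by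
    have h1γ : 0 < 1 - γ := by linarith
    positivity
  linarith [key, hge, hpos]

/-- **Hitting probability bound for a positively drifted random walk.**
Let `p` be a probability mass function on `ℤ` supported on `[-l, l]`, let `step k` be i.i.d.
steps with law `p`, and let `X n = step 0 + ⋯ + step (n-1)` be the associated random walk
started at `0`.  If the drift `∑ i, i * p i` is positive and `γ ∈ (0,1)` is a root of
`f(γ) = ∑_{i=1}^l (∑_{j=1}^i γ^j) p(i) − ∑_{i=1}^l (∑_{j=1}^i γ^{−j}) p(−i)`, then for every
positive integer `ξ`, the probability that the walk ever reaches level `−ξ` or below decays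
exponentially: it is strictly less than `γ^ξ`. -/
theorem random_walk_hitting_probability_exponential_decay
    {Ω : Type*} [MeasurableSpace Ω] (μ : Measure Ω) [IsProbabilityMeasure μ]
    (l : ℕ) (hl : 0 < l)
    (p : ℤ → ℝ)
    (hp_nonneg : ∀ i, 0 ≤ p i)
    (hp_sum : ∑ i ∈ Finset.Icc (-(l : ℤ)) (l : ℤ), p i = 1)
    (hp_supp : ∀ i : ℤ, (l : ℤ) < |i| → p i = 0)
    (step : ℕ → Ω → ℤ)
    (hmeas : ∀ k, Measurable (step k))
    (hindep : iIndepFun step μ)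
    (hlaw : ∀ k i, μ {ω | step k ω = i} = ENNReal.ofReal (p i))
    (X : ℕ → Ω → ℤ)
    (hX : ∀ n ω, X n ω = ∑ k ∈ Finset.range n, step k ω)
    (hdrift : 0 < ∑ i ∈ Finset.Icc (-(l : ℤ)) (l : ℤ), (i : ℝ) * p i)
    (f : ℝ → ℝ)
    (hf : ∀ g : ℝ, 0 < g →
      f g = (∑ i ∈ Finset.Icc 1 l, (∑ j ∈ Finset.Icc 1 i, g ^ j) * p (i : ℤ))
          - (∑ i ∈ Finset.Icc 1 l, (∑ j ∈ Finset.Icc 1 i, g ^ (-(j : ℤ))) * p (-(i : ℤ))))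
    (γ : ℝ) (hγ : γ ∈ Set.Ioo (0 : ℝ) 1) (hroot : f γ = 0)
    (ξ : ℕ) (hξ : 0 < ξ) :
    μ {ω | ∃ n ≥ 1, X n ω ≤ -(ξ : ℤ)}
      < ENNReal.ofReal (γ ^ ξ) := by
  classical
  obtain ⟨hγ0, hγ1⟩ := hγ
  have hγne : γ ≠ 0 := ne_of_gt hγ0
  set r : ℝ := ∑ i ∈ Finset.Icc (-(l : ℤ)) (l : ℤ), γ ^ i * p i with hrdef
  have hroot' : (∑ i ∈ Finset.Icc 1 l, (∑ j ∈ Finset.Icc 1 i, γ ^ j) * p (i : ℤ))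
      = ∑ i ∈ Finset.Icc 1 l, (∑ j ∈ Finset.Icc 1 i, γ ^ (-(j : ℤ))) * p (-(i : ℤ)) :=
    sub_eq_zero.mp ((hf γ hγ0).symm.trans hroot)
  have hr1 : r < 1 := rw_r_lt_one l p hp_nonneg hp_sum hdrift γ hγ0 hγ1 hroot'
  have hr0 : 0 ≤ r :=
    Finset.sum_nonneg fun i _ => mul_nonneg (le_of_lt (zpow_pos hγ0 i)) (hp_nonneg i)
  -- basic objects
  set W : ℕ → Ω → ℝ := fun n ω => γ ^ (X n ω) with hWdef
  set B : ℕ → Set Ω := fun n => {ω | ∀ k ∈ Finset.Icc 1 n, -(ξ:ℤ) < X k ω} with hBdef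
  have mX : ∀ n, Measurable (X n) := by
    intro n
    have : X n = fun ω => ∑ k ∈ Finset.range n, step k ω := funext (hX n)
    rw [this]
    exact Finset.measurable_sum _ fun k _ => hmeas k
  have mW : ∀ n, Measurable (W n) :=
    fun n => (Measurable.of_discrete (f := fun z : ℤ => γ ^ z)).comp (mX n)
  have mB : ∀ n, MeasurableSet (B n) := by
    intro n
    have : B n = ⋂ k ∈ Finset.Icc 1 n, X k ⁻¹' {x : ℤ | -(ξ:ℤ) < x} := by
      ext ω
      simp only [hBdef, Set.mem_setOf_eq, Set.mem_iInter, Set.mem_preimage]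
    rw [this]
    exact MeasurableSet.biInter (Finset.Icc 1 n).countable_toSet
      (fun k _ => mX k MeasurableSet.of_discrete)
  -- the good set
  set G : Set Ω := {ω | ∀ k, |step k ω| ≤ (l:ℤ)} with hGdef
  have hGc : μ Gᶜ = 0 := by
    have h0 : Gᶜ = ⋃ k, {ω | (l:ℤ) < |step k ω|} := by
      ext ω; simp [hGdef, not_le]
    rw [h0]
    refine measure_iUnion_null fun k => ?_
    have h2 : {ω | (l:ℤ) < |step k ω|} = ⋃ i ∈ {i : ℤ | (l:ℤ) < |i|}, step k ⁻¹' {i} := by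
      ext ω; simp
    rw [h2]
    refine (measure_biUnion_null_iff (Set.to_countable _)).mpr fun i hi => ?_
    have h3 : step k ⁻¹' {i} = {ω | step k ω = i} := rfl
    rw [h3, hlaw k i, hp_supp i hi]
    simp
  have hGae : ∀ᵐ ω ∂μ, ω ∈ G := by
    rw [ae_iff]
    have : {ω | ¬ ω ∈ G} = Gᶜ := rfl
    rw [this]; exact hGc
  have hXlb : ∀ ω ∈ G, ∀ n, -((n*l : ℕ) : ℤ) ≤ X n ω := by
    intro ω hω n
    rw [hX]
    calc -((n*l:ℕ):ℤ) = ∑ _k ∈ Finset.range n, -(l:ℤ) := by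
          rw [Finset.sum_const, Finset.card_range, smul_neg, nsmul_eq_mul]
          push_cast; ring
      _ ≤ ∑ k ∈ Finset.range n, step k ω :=
          Finset.sum_le_sum fun k _ => (abs_le.mp (hω k)).1
  have hWpos : ∀ n ω, 0 < W n ω := fun n ω => zpow_pos hγ0 _
  have hWub : ∀ n, ∀ ω ∈ G, W n ω ≤ γ ^ (-((n*l:ℕ):ℤ)) := fun n ω hω =>
    zpow_le_zpow_right_of_le_one₀ hγ0 (le_of_lt hγ1) (hXlb ω hω n)
  have hInt : ∀ (n : ℕ) (S : Set Ω), MeasurableSet S → Integrable (S.indicator (W n)) μ := by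
    intro n S hS
    refine ⟨((mW n).indicator hS).aestronglyMeasurable, ?_⟩
    apply HasFiniteIntegral.of_bounded (C := γ ^ (-((n*l:ℕ):ℤ)))
    filter_upwards [hGae] with ω hω
    rw [Real.norm_eq_abs]
    by_cases hωS : ω ∈ S
    · rw [Set.indicator_of_mem hωS, abs_of_pos (hWpos n ω)]
      exact hWub n ω hω
    · rw [Set.indicator_of_notMem hωS, abs_zero]
      exact le_of_lt (zpow_pos hγ0 _)
  have hYInt : ∀ n, Integrable (fun ω => γ ^ (step n ω)) μ := by
    intro n
    refine ⟨((Measurable.of_discrete (f := fun z : ℤ => γ ^ z)).comp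
      (hmeas n)).aestronglyMeasurable, ?_⟩
    apply HasFiniteIntegral.of_bounded (C := γ ^ (-(l:ℤ)))
    filter_upwards [hGae] with ω hω
    rw [Real.norm_eq_abs, abs_of_pos (zpow_pos hγ0 _)]
    exact zpow_le_zpow_right_of_le_one₀ hγ0 (le_of_lt hγ1) (abs_le.mp (hω n)).1
  have hEY : ∀ n, ∫ ω, γ ^ (step n ω) ∂μ = r := by
    intro n
    have hmeasS : ∀ i : ℤ, MeasurableSet {ω | step n ω = i} :=
      fun i => hmeas n (measurableSet_singleton i)
    have hae : (fun ω => γ ^ (step n ω)) =ᵐ[μ]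
        (fun ω => ∑ i ∈ Finset.Icc (-(l:ℤ)) (l:ℤ),
          ({ω' | step n ω' = i}).indicator (fun _ => γ ^ i) ω) := by
      filter_upwards [hGae] with ω hω
      have hmem : step n ω ∈ Finset.Icc (-(l:ℤ)) (l:ℤ) := Finset.mem_Icc.mpr (abs_le.mp (hω n))
      simp only [Set.indicator_apply, Set.mem_setOf_eq]
      rw [Finset.sum_ite_eq (Finset.Icc (-(l:ℤ)) (l:ℤ)) (step n ω) (fun i => γ ^ i), if_pos hmem]
    rw [integral_congr_ae hae,
      integral_finset_sum _ (fun i _ => (integrable_const _).indicator (hmeasS i)), hrdef]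
    refine Finset.sum_congr rfl fun i _ => ?_
    rw [integral_indicator (hmeasS i), setIntegral_const, measureReal_def, hlaw n i,
      ENNReal.toReal_ofReal (hp_nonneg i), smul_eq_mul, mul_comm]
  -- independence
  have hIndepFY : ∀ n, IndepFun ((B n).indicator (W n)) (fun ω => γ ^ (step n ω)) μ := by
    intro n
    have hd : Disjoint (Finset.range n) ({n} : Finset ℕ) := by simp
    have base := hindep.indepFun_finset (Finset.range n) {n} hd hmeas
    set ext : (↥(Finset.range n) → ℤ) → ℕ → ℤ :=
      fun v j => if h : j ∈ Finset.range n then v ⟨j, h⟩ else 0 with hext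
    set φ : (↥(Finset.range n) → ℤ) → ℝ := fun v =>
      if ∀ k ∈ Finset.Icc 1 n, -(ξ:ℤ) < ∑ j ∈ Finset.range k, ext v j
      then γ ^ (∑ j ∈ Finset.range n, ext v j) else 0 with hφdef
    set ψ : (↥({n} : Finset ℕ) → ℤ) → ℝ :=
      fun v => γ ^ (v ⟨n, Finset.mem_singleton_self n⟩) with hψdef
    have hφ : Measurable φ := Measurable.of_discrete
    have hψ : Measurable ψ := Measurable.of_discrete
    have hcomp := base.comp hφ hψ
    have hsum : ∀ (ω : Ω) (k : ℕ), k ≤ n →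
        ∑ j ∈ Finset.range k, ext (fun i : ↥(Finset.range n) => step i ω) j = X k ω := by
      intro ω k hk
      rw [hX]
      refine Finset.sum_congr rfl fun j hj => ?_
      have hjn : j ∈ Finset.range n := by
        simp only [Finset.mem_range] at *; omega
      simp only [hext]
      rw [dif_pos hjn]
    have e1 : φ ∘ (fun ω (i : ↥(Finset.range n)) => step i ω) = (B n).indicator (W n) := by
      funext ω
      simp only [Function.comp_apply, hφdef]
      by_cases hω : ω ∈ B n
      · rw [Set.indicator_of_mem hω, if_pos, hsum ω n le_rfl]
        intro k hk
        rw [hsum ω k (Finset.mem_Icc.mp hk).2]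
        exact hω k hk
      · rw [Set.indicator_of_notMem hω, if_neg]
        intro hcon
        apply hω
        intro k hk
        have := hcon k hk
        rwa [hsum ω k (Finset.mem_Icc.mp hk).2] at this
    have e2 : ψ ∘ (fun ω (i : ↥({n} : Finset ℕ)) => step i ω) = fun ω => γ ^ (step n ω) := by
      funext ω; rfl
    rwa [e1, e2] at hcomp
  -- key recursion
  have hkey : ∀ n, ∫ ω, (B n).indicator (W (n+1)) ω ∂μ
      = r * ∫ ω, (B n).indicator (W n) ω ∂μ := by
    intro n
    have hprod : ∀ ω, (B n).indicator (W (n+1)) ω = (B n).indicator (W n) ω * γ ^ (step n ω) := by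
      intro ω
      by_cases hω : ω ∈ B n
      · rw [Set.indicator_of_mem hω, Set.indicator_of_mem hω]
        show γ ^ (X (n+1) ω) = γ ^ (X n ω) * γ ^ (step n ω)
        rw [hX (n+1) ω, Finset.sum_range_succ, ← hX n ω, zpow_add₀ hγne]
      · rw [Set.indicator_of_notMem hω, Set.indicator_of_notMem hω, zero_mul]
    calc ∫ ω, (B n).indicator (W (n+1)) ω ∂μ
        = ∫ ω, (B n).indicator (W n) ω * γ ^ (step n ω) ∂μ := by
          exact integral_congr_ae (Filter.EventuallyEq.of_eq (funext hprod))
      _ = (∫ ω, (B n).indicator (W n) ω ∂μ) * ∫ ω, γ ^ (step n ω) ∂μ :=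
          (hIndepFY n).integral_fun_mul_eq_mul_integral ((hInt n _ (mB n)).aestronglyMeasurable)
            ((hYInt n).aestronglyMeasurable)
      _ = r * ∫ ω, (B n).indicator (W n) ω ∂μ := by rw [hEY n, mul_comm]
  set a : ℕ → ℝ := fun n => ∫ ω, (B n).indicator (W n) ω ∂μ with hadef
  have hB0 : B 0 = Set.univ := by
    ext ω
    simp only [hBdef, Set.mem_setOf_eq, Set.mem_univ, iff_true]
    intro k hk
    exact absurd hk (by rw [Finset.mem_Icc]; omega)
  have ha0 : a 0 = 1 := by
    have hW0 : ∀ ω, W 0 ω = 1 := fun ω => by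
      show γ ^ (X 0 ω) = 1
      rw [hX 0 ω]; simp
    calc a 0 = ∫ _ω, (1:ℝ) ∂μ := by
          refine integral_congr_ae (Filter.EventuallyEq.of_eq (funext fun ω => ?_))
          rw [hB0, Set.indicator_univ, hW0 ω]
      _ = 1 := by simp
  have haNN : ∀ n, 0 ≤ a n := fun n =>
    integral_nonneg fun ω => Set.indicator_nonneg (fun ω' _ => le_of_lt (hWpos n ω')) ω
  -- stopping decomposition
  set D : ℕ → Set Ω := fun n => B n ∩ {ω | X (n+1) ω ≤ -(ξ:ℤ)} with hDdef
  have mD : ∀ n, MeasurableSet (D n) := fun n =>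
    (mB n).inter (mX (n+1) (MeasurableSet.of_discrete (s := {x : ℤ | x ≤ -(ξ:ℤ)})))
  have hBsplit : ∀ n, B n = B (n+1) ∪ D n := by
    intro n; ext ω
    simp only [hBdef, hDdef, Set.mem_union, Set.mem_inter_iff, Set.mem_setOf_eq]
    constructor
    · intro h
      by_cases hc : -(ξ:ℤ) < X (n+1) ω
      · left; intro k hk
        rw [Finset.mem_Icc] at hk
        rcases Nat.lt_or_ge k (n+1) with h1 | h1
        · exact h k (Finset.mem_Icc.mpr ⟨hk.1, by omega⟩)
        · have hkn : k = n+1 := by omega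
          rw [hkn]; exact hc
      · right; exact ⟨h, by omega⟩
    · rintro (h | h)
      · intro k hk; rw [Finset.mem_Icc] at hk
        exact h k (Finset.mem_Icc.mpr ⟨hk.1, by omega⟩)
      · intro k hk; exact h.1 k hk
  have hdisj : ∀ n, Disjoint (B (n+1)) (D n) := by
    intro n
    rw [Set.disjoint_left]
    intro ω h1 h2
    have hx := h1 (n+1) (Finset.mem_Icc.mpr ⟨by omega, le_rfl⟩)
    have hy : X (n+1) ω ≤ -(ξ:ℤ) := h2.2
    exact absurd hy (not_le.mpr hx)
  have hstep : ∀ n, γ ^ (-(ξ:ℤ)) * (μ (D n)).toReal + a (n+1) ≤ r * a n := by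
    intro n
    have hIB : IntegrableOn (W (n+1)) (B (n+1)) μ :=
      (integrable_indicator_iff (mB (n+1))).mp (hInt (n+1) _ (mB (n+1)))
    have hID : IntegrableOn (W (n+1)) (D n) μ :=
      (integrable_indicator_iff (mD n)).mp (hInt (n+1) _ (mD n))
    have hsplitInt : ∫ ω in B n, W (n+1) ω ∂μ
        = (∫ ω in B (n+1), W (n+1) ω ∂μ) + ∫ ω in D n, W (n+1) ω ∂μ := by
      rw [hBsplit n]
      exact setIntegral_union (hdisj n) (mD n) hIB hID
    have hlow : γ ^ (-(ξ:ℤ)) * (μ (D n)).toReal ≤ ∫ ω in D n, W (n+1) ω ∂μ := by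
      refine setIntegral_ge_of_const_le_real (mD n) (measure_ne_top μ _) (fun ω hω => ?_) hID
      exact zpow_le_zpow_right_of_le_one₀ hγ0 (le_of_lt hγ1) hω.2
    have hL : ∫ ω in B n, W (n+1) ω ∂μ = r * a n := by
      rw [← integral_indicator (mB n)]
      exact hkey n
    have hA : a (n+1) = ∫ ω in B (n+1), W (n+1) ω ∂μ := integral_indicator (mB (n+1))
    linarith
  -- complement measure
  set c : ℕ → ℝ := fun N => (μ ((B N)ᶜ)).toReal with hcdef
  have hBsub : ∀ n, B (n+1) ⊆ B n := fun n => (hBsplit n) ▸ Set.subset_union_left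
  have hdisj2 : ∀ n, Disjoint ((B n)ᶜ) (D n) := by
    intro n
    rw [Set.disjoint_left]
    intro ω h1 h2
    exact h1 h2.1
  have hBcompl : ∀ n, (B (n+1))ᶜ = (B n)ᶜ ∪ D n := by
    intro n; ext ω
    simp only [Set.mem_compl_iff, Set.mem_union]
    constructor
    · intro h
      by_cases hb : ω ∈ B n
      · right
        have := (hBsplit n) ▸ hb
        rcases this with h' | h'
        · exact absurd h' h
        · exact h'
      · left; exact hb
    · rintro (h | h)
      · exact fun hc => h (hBsub n hc)
      · exact fun hc => (Set.disjoint_left.mp (hdisj n)) hc h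
  have hcrec : ∀ n, c (n+1) = c n + (μ (D n)).toReal := by
    intro n
    show (μ ((B (n+1))ᶜ)).toReal = (μ ((B n)ᶜ)).toReal + (μ (D n)).toReal
    rw [hBcompl n, measure_union (hdisj2 n) (mD n),
      ENNReal.toReal_add (measure_ne_top μ _) (measure_ne_top μ _)]
  have hc0 : c 0 = 0 := by
    show (μ ((B 0)ᶜ)).toReal = 0
    rw [hB0, Set.compl_univ, measure_empty]
    simp
  have hmain : ∀ N, 1 ≤ N → γ ^ (-(ξ:ℤ)) * c N + a N ≤ r := by
    intro N hN
    induction N, hN using Nat.le_induction with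
    | base =>
      have h1 := hstep 0
      rw [ha0, mul_one] at h1
      rw [hcrec 0, hc0, zero_add]
      exact h1
    | succ N hN ih =>
      have h1 := hstep N
      have h4 : r * a N ≤ a N := by nlinarith [hr1, haNN N]
      rw [hcrec N, mul_add]
      linarith
  have hboundC : ∀ N, c N ≤ r * γ ^ ξ := by
    intro N
    have hpow : 0 < γ ^ ξ := pow_pos hγ0 ξ
    cases N with
    | zero => rw [hc0]; positivity
    | succ N =>
      have h := hmain (N+1) (by omega)
      have h2 : γ ^ (-(ξ:ℤ)) * c (N+1) ≤ r := by linarith [haNN (N+1)]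
      have hzp : γ ^ (-(ξ:ℤ)) = (γ ^ ξ)⁻¹ := by rw [zpow_neg, zpow_natCast]
      rw [hzp] at h2
      calc c (N+1) = ((γ^ξ)⁻¹ * c (N+1)) * γ^ξ := by field_simp
        _ ≤ r * γ^ξ := mul_le_mul_of_nonneg_right h2 (le_of_lt hpow)
  have hEeq : {ω | ∃ n ≥ 1, X n ω ≤ -(ξ:ℤ)} = ⋃ N, (B N)ᶜ := by
    ext ω
    simp only [Set.mem_setOf_eq, Set.mem_iUnion, Set.mem_compl_iff, hBdef]
    constructor
    · rintro ⟨n, hn1, hn2⟩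
      exact ⟨n, fun hall => absurd hn2 (not_le.mpr (hall n (Finset.mem_Icc.mpr ⟨hn1, le_rfl⟩)))⟩
    · rintro ⟨N, hN⟩
      push_neg at hN
      obtain ⟨k, hk, hk2⟩ := hN
      exact ⟨k, (Finset.mem_Icc.mp hk).1, hk2⟩
  have hmono : Monotone (fun N => (B N)ᶜ) := by
    intro m n hmn
    have : B n ⊆ B m := by
      intro ω hω k hk
      exact hω k (Finset.mem_Icc.mpr ⟨(Finset.mem_Icc.mp hk).1,
        le_trans (Finset.mem_Icc.mp hk).2 hmn⟩)
    exact Set.compl_subset_compl.mpr this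
  rw [hEeq]
  calc μ (⋃ N, (B N)ᶜ) = ⨆ N, μ ((B N)ᶜ) := hmono.directed_le.measure_iUnion
    _ ≤ ENNReal.ofReal (r * γ ^ ξ) := by
        refine iSup_le fun N => ?_
        rw [← ENNReal.ofReal_toReal (measure_ne_top μ ((B N)ᶜ))]
        exact ENNReal.ofReal_le_ofReal (hboundC N)
    _ < ENNReal.ofReal (γ ^ ξ) := by
        rw [ENNReal.ofReal_lt_ofReal_iff (pow_pos hγ0 ξ)]
        nlinarith [pow_pos hγ0 ξ]
end

section
/- Suppose the drift satisfies ∑_{i=-l}^{l} i·p(i) > 0 and that p(−i) > 0 for some i ∈ {1, …, l}. Then there exists a unique γ ∈ (0,1) with f(γ) = 0. -/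
open Finset

lemma sum_symm_Icc (l : ℕ) (g : ℤ → ℝ) :
    ∑ i ∈ Finset.Icc (-(l : ℤ)) (l : ℤ), g i
      = g 0 + ∑ i ∈ Finset.Icc 1 l, (g i + g (-(i : ℤ))) := by
  induction l with
  | zero => simp
  | succ n ih =>
    have h1 : Finset.Icc (-((n+1 : ℕ) : ℤ)) ((n+1 : ℕ) : ℤ)
        = insert (-((n:ℤ)+1)) (insert ((n:ℤ)+1) (Finset.Icc (-(n:ℤ)) (n:ℤ))) := by
      ext x; simp [Finset.mem_Icc]; omega
    have h2 : (Finset.Icc 1 (n+1) : Finset ℕ) = insert (n+1) (Finset.Icc 1 n) := by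
      ext x; simp [Finset.mem_Icc]; omega
    have hm1 : ((n:ℤ)+1) ∉ Finset.Icc (-(n:ℤ)) (n:ℤ) := by simp [Finset.mem_Icc]
    have hm2 : (-((n:ℤ)+1)) ∉ insert ((n:ℤ)+1) (Finset.Icc (-(n:ℤ)) (n:ℤ)) := by
      simp [Finset.mem_Icc]; omega
    have hm3 : (n+1) ∉ (Finset.Icc 1 n : Finset ℕ) := by simp
    rw [h1, Finset.sum_insert hm2, Finset.sum_insert hm1, h2, Finset.sum_insert hm3, ih]
    push_cast
    ring

/-- If the drift `∑ i, i * p i` of the step distribution `p` (supported on `[-l, l]`) is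
positive and some negative step has positive probability, then the function
`f(γ) = ∑_{i=1}^l (∑_{j=1}^i γ^j) p(i) − ∑_{i=1}^l (∑_{j=1}^i γ^{−j}) p(−i)` has a unique
root `γ` in the open interval `(0, 1)`. -/
theorem random_walk_scale_root_exists_unique
    (l : ℕ) (hl : 0 < l)
    (p : ℤ → ℝ)
    (hp_nonneg : ∀ i, 0 ≤ p i)
    (hp_sum : ∑ i ∈ Finset.Icc (-(l : ℤ)) (l : ℤ), p i = 1)
    (hp_supp : ∀ i : ℤ, (l : ℤ) < |i| → p i = 0)
    (hdrift : 0 < ∑ i ∈ Finset.Icc (-(l : ℤ)) (l : ℤ), (i : ℝ) * p i)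
    (hneg : ∃ i ∈ Finset.Icc 1 l, 0 < p (-(i : ℤ)))
    (f : ℝ → ℝ)
    (hf : ∀ g : ℝ, 0 < g →
      f g = (∑ i ∈ Finset.Icc 1 l, (∑ j ∈ Finset.Icc 1 i, g ^ j) * p (i : ℤ))
          - (∑ i ∈ Finset.Icc 1 l, (∑ j ∈ Finset.Icc 1 i, g ^ (-(j : ℤ))) * p (-(i : ℤ)))) :
    ∃! γ : ℝ, γ ∈ Set.Ioo (0 : ℝ) 1 ∧ f γ = 0 := by
  obtain ⟨i₀, hi₀mem, hi₀pos⟩ := hneg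
  rw [Finset.mem_Icc] at hi₀mem
  set F : ℝ → ℝ := fun g =>
      (∑ i ∈ Finset.Icc 1 l, (∑ j ∈ Finset.Icc 1 i, g ^ j) * p (i : ℤ))
        - (∑ i ∈ Finset.Icc 1 l, (∑ j ∈ Finset.Icc 1 i, (g ^ j)⁻¹) * p (-(i : ℤ))) with hF
  have hfF : ∀ g : ℝ, 0 < g → f g = F g := by
    intro g hg
    rw [hf g hg, hF]
    simp [zpow_neg]
  -- F is strictly monotone on (0, ∞)
  have hmono : StrictMonoOn F (Set.Ioi (0:ℝ)) := by
    intro a ha b hb hab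
    simp only [Set.mem_Ioi] at ha hb
    have hA : (∑ i ∈ Finset.Icc 1 l, (∑ j ∈ Finset.Icc 1 i, a ^ j) * p (i : ℤ))
        ≤ ∑ i ∈ Finset.Icc 1 l, (∑ j ∈ Finset.Icc 1 i, b ^ j) * p (i : ℤ) := by
      apply Finset.sum_le_sum
      intro i _
      apply mul_le_mul_of_nonneg_right _ (hp_nonneg _)
      apply Finset.sum_le_sum
      intro j _
      exact pow_le_pow_left₀ ha.le hab.le j
    have hB : (∑ i ∈ Finset.Icc 1 l, (∑ j ∈ Finset.Icc 1 i, (b ^ j)⁻¹) * p (-(i : ℤ)))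
        < ∑ i ∈ Finset.Icc 1 l, (∑ j ∈ Finset.Icc 1 i, (a ^ j)⁻¹) * p (-(i : ℤ)) := by
      apply Finset.sum_lt_sum
      · intro i _
        apply mul_le_mul_of_nonneg_right _ (hp_nonneg _)
        apply Finset.sum_le_sum
        intro j _
        exact inv_anti₀ (pow_pos ha j) (pow_le_pow_left₀ ha.le hab.le j)
      · refine ⟨i₀, Finset.mem_Icc.mpr hi₀mem, ?_⟩
        apply mul_lt_mul_of_pos_right _ hi₀pos
        apply Finset.sum_lt_sum_of_nonempty
        · exact Finset.nonempty_Icc.mpr hi₀mem.1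
        · intro j hj
          rw [Finset.mem_Icc] at hj
          have hj1 : j ≠ 0 := by omega
          exact inv_strictAnti₀ (pow_pos ha j) (pow_lt_pow_left₀ hab ha.le hj1)
    rw [hF]
    dsimp only
    linarith
  -- F 1 equals the drift
  have hF1 : F 1 = ∑ i ∈ Finset.Icc (-(l : ℤ)) (l : ℤ), (i : ℝ) * p i := by
    rw [sum_symm_Icc l (fun i => (i : ℝ) * p i)]
    rw [hF]
    simp only [one_pow, inv_one, Finset.sum_const, Nat.card_Icc, Nat.add_sub_cancel,
      nsmul_eq_mul]
    push_cast
    rw [Finset.sum_add_distrib, ← Finset.sum_sub_distrib]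
    ring_nf
    have hcg : ∀ x ∈ Finset.Icc 1 l, (x:ℝ) * p x - x * p (-(x:ℤ)) = (x:ℝ) * p x + (-(x:ℝ)) * p (-(x:ℤ)) := fun x _ => by ring
    rw [Finset.sum_congr rfl hcg, Finset.sum_add_distrib]
    simp only [neg_mul]
  have hF1pos : 0 < F 1 := by rw [hF1]; exact hdrift
  -- choose a small point where F is negative
  set C : ℝ := (l : ℝ) * l with hC
  set γ₀ : ℝ := min (1/2) (p (-(i₀:ℤ)) / (C + 1)) with hγ₀
  have hCnn : 0 ≤ C := by positivity
  have hγ₀pos : 0 < γ₀ := lt_min (by norm_num) (div_pos hi₀pos (by positivity))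
  have hγ₀lt1 : γ₀ < 1 := lt_of_le_of_lt (min_le_left _ _) (by norm_num)
  have hA : (∑ i ∈ Finset.Icc 1 l, (∑ j ∈ Finset.Icc 1 i, γ₀ ^ j) * p (i : ℤ)) ≤ C := by
    have hterm : ∀ i ∈ Finset.Icc 1 l, (∑ j ∈ Finset.Icc 1 i, γ₀ ^ j) * p (i : ℤ) ≤ (l : ℝ) * 1 := by
      intro i hi
      rw [Finset.mem_Icc] at hi
      have h1 : (∑ j ∈ Finset.Icc 1 i, γ₀ ^ j) ≤ (l : ℝ) := by
        calc (∑ j ∈ Finset.Icc 1 i, γ₀ ^ j) ≤ ∑ j ∈ Finset.Icc 1 i, (1:ℝ) := by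
              apply Finset.sum_le_sum
              intro j _
              exact pow_le_one₀ hγ₀pos.le hγ₀lt1.le
          _ = (i : ℝ) := by simp [Nat.card_Icc]
          _ ≤ (l : ℝ) := by exact_mod_cast hi.2
      have h2 : p (i : ℤ) ≤ 1 := by
        rw [← hp_sum]
        apply Finset.single_le_sum (fun j _ => hp_nonneg j)
        rw [Finset.mem_Icc]
        omega
      have h3 : 0 ≤ ∑ j ∈ Finset.Icc 1 i, γ₀ ^ j :=
        Finset.sum_nonneg fun j _ => (pow_pos hγ₀pos j).le
      exact mul_le_mul h1 h2 (hp_nonneg _) (Nat.cast_nonneg l)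
    calc (∑ i ∈ Finset.Icc 1 l, (∑ j ∈ Finset.Icc 1 i, γ₀ ^ j) * p (i : ℤ))
        ≤ ∑ _i ∈ Finset.Icc 1 l, (l : ℝ) * 1 := Finset.sum_le_sum hterm
      _ = C := by simp [Nat.card_Icc, hC]
  have hB : γ₀⁻¹ * p (-(i₀:ℤ))
      ≤ ∑ i ∈ Finset.Icc 1 l, (∑ j ∈ Finset.Icc 1 i, (γ₀ ^ j)⁻¹) * p (-(i : ℤ)) := by
    have h1 : γ₀⁻¹ ≤ ∑ j ∈ Finset.Icc 1 i₀, (γ₀ ^ j)⁻¹ := by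
      have := Finset.single_le_sum (f := fun j => (γ₀ ^ j)⁻¹)
        (fun j _ => (inv_pos.mpr (pow_pos hγ₀pos j)).le)
        (Finset.mem_Icc.mpr ⟨le_refl 1, hi₀mem.1⟩)
      simpa using this
    have h2 : γ₀⁻¹ * p (-(i₀:ℤ)) ≤ (∑ j ∈ Finset.Icc 1 i₀, (γ₀ ^ j)⁻¹) * p (-(i₀ : ℤ)) :=
      mul_le_mul_of_nonneg_right h1 (hp_nonneg _)
    refine h2.trans ?_
    exact Finset.single_le_sum (f := fun i : ℕ => (∑ j ∈ Finset.Icc 1 i, (γ₀ ^ j)⁻¹) * p (-(i : ℤ)))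
      (fun i _ => mul_nonneg (Finset.sum_nonneg fun j _ => (inv_pos.mpr (pow_pos hγ₀pos j)).le)
        (hp_nonneg _)) (Finset.mem_Icc.mpr hi₀mem)
  have h3 : (C + 1) ≤ γ₀⁻¹ * p (-(i₀:ℤ)) := by
    have h1 : γ₀ ≤ p (-(i₀:ℤ)) / (C + 1) := min_le_right _ _
    have h2 : γ₀ * (C + 1) ≤ p (-(i₀:ℤ)) := by
      rw [← le_div_iff₀ (by positivity)]
      exact h1
    rw [inv_mul_eq_div, le_div_iff₀ hγ₀pos]
    linarith
  have hFγ₀ : F γ₀ < 0 := by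
    rw [hF]
    dsimp only
    linarith
  -- continuity of F on [γ₀, 1]
  have hcont : ContinuousOn F (Set.Icc γ₀ 1) := by
    rw [hF]
    apply ContinuousOn.sub
    · apply continuousOn_finset_sum
      intro i _
      apply ContinuousOn.mul _ continuousOn_const
      apply continuousOn_finset_sum
      intro j _
      exact (continuous_pow j).continuousOn
    · apply continuousOn_finset_sum
      intro i _
      apply ContinuousOn.mul _ continuousOn_const
      apply continuousOn_finset_sum
      intro j _
      exact ((continuous_pow j).continuousOn).inv₀
        (fun x hx => pow_ne_zero j (ne_of_gt (lt_of_lt_of_le hγ₀pos hx.1)))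
  -- intermediate value theorem
  obtain ⟨c, hcmem, hFc⟩ := intermediate_value_Ioo hγ₀lt1.le hcont
    (Set.mem_Ioo.mpr ⟨hFγ₀, hF1pos⟩)
  have hc01 : c ∈ Set.Ioo (0:ℝ) 1 := ⟨lt_trans hγ₀pos hcmem.1, hcmem.2⟩
  refine ⟨c, ⟨hc01, by rw [hfF c hc01.1]; exact hFc⟩, ?_⟩
  rintro y ⟨hy01, hfy⟩
  apply hmono.injOn (Set.mem_Ioi.mpr hy01.1) (Set.mem_Ioi.mpr hc01.1)
  rw [← hfF y hy01.1, ← hfF c hc01.1, hfy]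
  rw [hfF c hc01.1]
  exact hFc.symm
end

section
/- Suppose γ ∈ (0,1) satisfies f(γ) = 0. Then the process Y_n = g(X_n), n ≥ 0, is a submartingale with respect to the filtration generated by (ξ_1, …, ξ_n): for every n, 𝔼[Y_{n+1} | 𝓕_n] ≥ Y_n almost surely, with equality in the conditional-expectation inequality on the event {X_n = 0}. -/
open MeasureTheory ProbabilityTheory Finset

/-- increment of g -/
noncomputable def Dfun (γ : ℝ) (y : ℤ) : ℝ := if 1 ≤ y then γ ^ y else γ ^ (y - 1)

lemma g_step {γ : ℝ} {g : ℤ → ℝ}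
    (hg_pos : ∀ x : ℤ, 0 < x → g x = ∑ i ∈ Finset.Icc 1 x.toNat, γ ^ i)
    (hg_zero : g 0 = 0)
    (hg_neg : ∀ x : ℤ, x < 0 → g x = -∑ i ∈ Finset.Icc 1 (-x).toNat, γ ^ (-(i : ℤ)))
    (y : ℤ) : g y = g (y - 1) + Dfun γ y := by
  unfold Dfun
  rcases lt_trichotomy y 1 with hy | hy | hy
  · have hy0 : y ≤ 0 := by omega
    rw [if_neg (by omega)]
    have h1 : g (y - 1) = -∑ i ∈ Finset.Icc 1 (-(y-1)).toNat, γ ^ (-(i : ℤ)) :=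
      hg_neg _ (by omega)
    have h2 : (-(y-1)).toNat = (-y).toNat + 1 := by omega
    rw [h1, h2, Finset.sum_Icc_succ_top (by omega : 1 ≤ (-y).toNat + 1)]
    have h3 : g y = -∑ i ∈ Finset.Icc 1 (-y).toNat, γ ^ (-(i : ℤ)) := by
      rcases eq_or_lt_of_le hy0 with h | h
      · rw [h, hg_zero]; simp
      · exact hg_neg _ h
    rw [h3]
    have : (-(((-y).toNat + 1 : ℕ) : ℤ)) = y - 1 := by omega
    rw [this]; ring
  · subst hy
    rw [if_pos le_rfl, hg_pos 1 one_pos, show (1:ℤ) - 1 = 0 by ring, hg_zero]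
    norm_num
  · rw [if_pos (by omega)]
    have h1 : g y = ∑ i ∈ Finset.Icc 1 y.toNat, γ ^ i := hg_pos _ (by omega)
    have h2 : g (y - 1) = ∑ i ∈ Finset.Icc 1 (y-1).toNat, γ ^ i := hg_pos _ (by omega)
    have h3 : y.toNat = (y-1).toNat + 1 := by omega
    have h4 : γ ^ y = γ ^ ((y-1).toNat + 1 : ℕ) := by
      rw [← zpow_natCast]; congr 1; omega
    rw [h1, h2, h3, Finset.sum_Icc_succ_top (by omega : 1 ≤ (y-1).toNat + 1), h4]

lemma D_ge {γ : ℝ} (hγ0 : 0 < γ) (hγ1 : γ < 1) (x j : ℤ) (hj : 1 ≤ j) :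
    γ ^ x * Dfun γ j ≤ Dfun γ (x + j) := by
  have hj' : Dfun γ j = γ ^ j := if_pos hj
  rw [hj', ← zpow_add₀ (ne_of_gt hγ0)]
  unfold Dfun
  by_cases h : 1 ≤ x + j
  · rw [if_pos h]
  · rw [if_neg h]
    exact zpow_le_zpow_right_of_le_one₀ hγ0 hγ1.le (by omega)

lemma D_le {γ : ℝ} (hγ0 : 0 < γ) (hγ1 : γ < 1) (x j : ℤ) (hj : j ≤ 0) :
    Dfun γ (x + j) ≤ γ ^ x * Dfun γ j := by
  have hj' : Dfun γ j = γ ^ (j - 1) := if_neg (by omega)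
  rw [hj', ← zpow_add₀ (ne_of_gt hγ0)]
  unfold Dfun
  by_cases h : 1 ≤ x + j
  · rw [if_pos h]
    exact zpow_le_zpow_right_of_le_one₀ hγ0 hγ1.le (by omega)
  · rw [if_neg h, show x + (j - 1) = x + j - 1 by ring]

lemma scale_key {γ : ℝ} (hγ0 : 0 < γ) (hγ1 : γ < 1) {g : ℤ → ℝ}
    (hg_pos : ∀ x : ℤ, 0 < x → g x = ∑ i ∈ Finset.Icc 1 x.toNat, γ ^ i)
    (hg_zero : g 0 = 0)
    (hg_neg : ∀ x : ℤ, x < 0 → g x = -∑ i ∈ Finset.Icc 1 (-x).toNat, γ ^ (-(i : ℤ)))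
    (x i : ℤ) : γ ^ x * g i ≤ g (x + i) - g x := by
  have hstep := g_step hg_pos hg_zero hg_neg
  rcases le_or_gt 0 i with hi | hi
  · obtain ⟨m, rfl⟩ : ∃ m : ℕ, i = (m : ℤ) := ⟨i.toNat, by omega⟩
    clear hi
    induction m with
    | zero => simp [hg_zero]
    | succ m ih =>
      have h1 : g ((m:ℤ) + 1) = g (m : ℤ) + Dfun γ ((m:ℤ)+1) := by
        have := hstep ((m:ℤ) + 1)
        rw [show (m:ℤ) + 1 - 1 = (m:ℤ) by ring] at this
        exact this
      have h2 : g (x + ((m:ℤ)+1)) = g (x + (m:ℤ)) + Dfun γ (x + ((m:ℤ)+1)) := by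
        have := hstep (x + ((m:ℤ) + 1))
        rw [show x + ((m:ℤ) + 1) - 1 = x + (m:ℤ) by ring] at this
        exact this
      have h3 := D_ge hγ0 hγ1 x ((m:ℤ)+1) (by omega)
      push_cast
      rw [h1, h2, mul_add]
      linarith
  · obtain ⟨m, rfl⟩ : ∃ m : ℕ, i = -((m : ℤ) + 1) := ⟨(-i-1).toNat, by omega⟩
    clear hi
    induction m with
    | zero =>
      norm_num
      have h1 := hstep 0
      have h2 := hstep x
      have h3 := D_le hγ0 hγ1 x 0 le_rfl
      rw [hg_zero, show (0:ℤ) - 1 = -1 by ring] at h1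
      rw [show x + 0 = x by ring] at h3
      have h4 : g (-1) = -(Dfun γ 0) := by linarith
      have h5 : γ ^ x * g (-1) = -(γ ^ x * Dfun γ 0) := by rw [h4]; ring
      rw [show x + -1 = x - 1 by ring, h5]
      linarith
    | succ m ih =>
      have h1 : g (-((m:ℤ)+1+1)) = g (-((m:ℤ)+1)) - Dfun γ (-((m:ℤ)+1)) := by
        have := hstep (-((m:ℤ)+1))
        rw [show -((m:ℤ)+1) - 1 = -((m:ℤ)+1+1) by ring] at this
        linarith
      have h2 : g (x + -((m:ℤ)+1+1)) = g (x + -((m:ℤ)+1)) - Dfun γ (x + -((m:ℤ)+1)) := by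
        have := hstep (x + -((m:ℤ)+1))
        rw [show x + -((m:ℤ)+1) - 1 = x + -((m:ℤ)+1+1) by ring] at this
        linarith
      have h3 := D_le hγ0 hγ1 x (-((m:ℤ)+1)) (by omega)
      push_cast
      push_cast at h1 h2 ih
      rw [h1, h2, mul_sub]
      linarith

lemma sum_Icc_int_split (l : ℕ) (F : ℤ → ℝ) :
    ∑ i ∈ Finset.Icc (-(l : ℤ)) (l : ℤ), F i
      = (∑ i ∈ Finset.Icc 1 l, F (i : ℤ)) + F 0 + ∑ i ∈ Finset.Icc 1 l, F (-(i : ℤ)) := by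
  induction l with
  | zero => simp
  | succ l ih =>
    have h1 : Finset.Icc (-((l+1 : ℕ) : ℤ)) ((l+1 : ℕ) : ℤ)
        = insert (-((l+1 : ℕ) : ℤ)) (insert ((l+1 : ℕ) : ℤ) (Finset.Icc (-(l : ℤ)) (l : ℤ))) := by
      ext x
      simp only [Finset.mem_Icc, Finset.mem_insert]
      omega
    rw [h1, Finset.sum_insert, Finset.sum_insert]
    · rw [ih, Finset.sum_Icc_succ_top (by omega : 1 ≤ l + 1),
        Finset.sum_Icc_succ_top (by omega : 1 ≤ l + 1)]
      push_cast
      ring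
    · simp only [Finset.mem_Icc]; omega
    · simp only [Finset.mem_insert, Finset.mem_Icc]; omega

section AlgMain
variable {γ : ℝ} {g : ℤ → ℝ} {p : ℤ → ℝ} {l : ℕ}

lemma sum_pg_eq
    (hg_pos : ∀ x : ℤ, 0 < x → g x = ∑ i ∈ Finset.Icc 1 x.toNat, γ ^ i)
    (hg_zero : g 0 = 0)
    (hg_neg : ∀ x : ℤ, x < 0 → g x = -∑ i ∈ Finset.Icc 1 (-x).toNat, γ ^ (-(i : ℤ)))
    (f : ℝ → ℝ)
    (hf : f γ = (∑ i ∈ Finset.Icc 1 l, (∑ j ∈ Finset.Icc 1 i, γ ^ j) * p (i : ℤ))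
          - (∑ i ∈ Finset.Icc 1 l, (∑ j ∈ Finset.Icc 1 i, γ ^ (-(j : ℤ))) * p (-(i : ℤ)))) :
    ∑ i ∈ Finset.Icc (-(l : ℤ)) (l : ℤ), p i * g i = f γ := by
  have hA : ∀ i ∈ Finset.Icc 1 l, p (i:ℤ) * g (i:ℤ) = (∑ j ∈ Finset.Icc 1 i, γ ^ j) * p (i:ℤ) := by
    intro i hi
    simp only [Finset.mem_Icc] at hi
    rw [hg_pos (i : ℤ) (by exact_mod_cast Nat.pos_of_ne_zero (by omega)),
      Int.toNat_natCast, mul_comm]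
  have hB : ∀ i ∈ Finset.Icc 1 l, p (-(i:ℤ)) * g (-(i:ℤ))
      = -((∑ j ∈ Finset.Icc 1 i, γ ^ (-(j:ℤ))) * p (-(i:ℤ))) := by
    intro i hi
    simp only [Finset.mem_Icc] at hi
    rw [hg_neg (-(i:ℤ)) (by omega), neg_neg, Int.toNat_natCast]
    ring
  rw [sum_Icc_int_split l (fun i => p i * g i), hg_zero, hf,
    Finset.sum_congr rfl hA, Finset.sum_congr rfl hB, Finset.sum_neg_distrib]
  ring

lemma g_le_sum (hγ0 : 0 < γ) (hγ1 : γ < 1)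
    (hg_pos : ∀ x : ℤ, 0 < x → g x = ∑ i ∈ Finset.Icc 1 x.toNat, γ ^ i)
    (hg_zero : g 0 = 0)
    (hg_neg : ∀ x : ℤ, x < 0 → g x = -∑ i ∈ Finset.Icc 1 (-x).toNat, γ ^ (-(i : ℤ)))
    (hp_nonneg : ∀ i, 0 ≤ p i)
    (hp_sum : ∑ i ∈ Finset.Icc (-(l : ℤ)) (l : ℤ), p i = 1)
    (hzero : ∑ i ∈ Finset.Icc (-(l : ℤ)) (l : ℤ), p i * g i = 0)
    (x : ℤ) : g x ≤ ∑ i ∈ Finset.Icc (-(l : ℤ)) (l : ℤ), p i * g (x + i) := by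
  have key : ∀ i : ℤ, γ ^ x * g i ≤ g (x + i) - g x :=
    scale_key hγ0 hγ1 hg_pos hg_zero hg_neg x
  have h1 : ∑ i ∈ Finset.Icc (-(l : ℤ)) (l : ℤ), p i * (γ ^ x * g i)
      ≤ ∑ i ∈ Finset.Icc (-(l : ℤ)) (l : ℤ), p i * (g (x + i) - g x) :=
    Finset.sum_le_sum (fun i _ => mul_le_mul_of_nonneg_left (key i) (hp_nonneg i))
  have h2 : ∑ i ∈ Finset.Icc (-(l : ℤ)) (l : ℤ), p i * (γ ^ x * g i)
      = γ ^ x * ∑ i ∈ Finset.Icc (-(l : ℤ)) (l : ℤ), p i * g i := by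
    rw [Finset.mul_sum]; exact Finset.sum_congr rfl (fun i _ => by ring)
  have h3 : ∑ i ∈ Finset.Icc (-(l : ℤ)) (l : ℤ), p i * (g (x + i) - g x)
      = (∑ i ∈ Finset.Icc (-(l : ℤ)) (l : ℤ), p i * g (x + i)) - g x := by
    have hC : ∀ i ∈ Finset.Icc (-(l : ℤ)) (l : ℤ),
        p i * (g (x + i) - g x) = p i * g (x + i) - p i * g x := fun i _ => mul_sub _ _ _
    rw [Finset.sum_congr rfl hC, Finset.sum_sub_distrib, ← Finset.sum_mul, hp_sum, one_mul]
  rw [h2, hzero, mul_zero, h3] at h1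
  linarith

end AlgMain

/-- **Submartingale property of the scale-transformed walk.**
With `γ ∈ (0,1)` a root of `f`, the process `Y n = g (X n)`, where `g` is the scale function
`g(x) = ∑_{i=1}^x γ^i` for `x > 0`, `g(0) = 0`, `g(x) = −∑_{i=1}^{−x} γ^{−i}` for `x < 0`,
is a submartingale with respect to the filtration `F n` generated by the first `n` steps:
each `Y n` is integrable and `F n`-measurable, `𝔼[Y (n+1) | F n] ≥ Y n` almost surely, and
the conditional-expectation inequality is an equality on the event `{X n = 0}`. -/
theorem random_walk_scale_submartingale
    {Ω : Type*} [m0 : MeasurableSpace Ω] (μ : Measure Ω) [IsProbabilityMeasure μ]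
    (l : ℕ) (hl : 0 < l)
    (p : ℤ → ℝ)
    (hp_nonneg : ∀ i, 0 ≤ p i)
    (hp_sum : ∑ i ∈ Finset.Icc (-(l : ℤ)) (l : ℤ), p i = 1)
    (hp_supp : ∀ i : ℤ, (l : ℤ) < |i| → p i = 0)
    (step : ℕ → Ω → ℤ)
    (hmeas : ∀ k, Measurable (step k))
    (hindep : iIndepFun step μ)
    (hlaw : ∀ k i, μ {ω | step k ω = i} = ENNReal.ofReal (p i))
    (X : ℕ → Ω → ℤ)
    (hX : ∀ n ω, X n ω = ∑ k ∈ Finset.range n, step k ω)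
    (f : ℝ → ℝ)
    (hf : ∀ g : ℝ, 0 < g →
      f g = (∑ i ∈ Finset.Icc 1 l, (∑ j ∈ Finset.Icc 1 i, g ^ j) * p (i : ℤ))
          - (∑ i ∈ Finset.Icc 1 l, (∑ j ∈ Finset.Icc 1 i, g ^ (-(j : ℤ))) * p (-(i : ℤ))))
    (γ : ℝ) (hγ : γ ∈ Set.Ioo (0 : ℝ) 1) (hroot : f γ = 0)
    (g : ℤ → ℝ)
    (hg_pos : ∀ x : ℤ, 0 < x → g x = ∑ i ∈ Finset.Icc 1 x.toNat, γ ^ i)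
    (hg_zero : g 0 = 0)
    (hg_neg : ∀ x : ℤ, x < 0 → g x = -∑ i ∈ Finset.Icc 1 (-x).toNat, γ ^ (-(i : ℤ)))
    (Y : ℕ → Ω → ℝ)
    (hY : ∀ n ω, Y n ω = g (X n ω))
    (F : ℕ → MeasurableSpace Ω)
    (hF : ∀ n, F n = ⨆ k ∈ Finset.range n,
      MeasurableSpace.comap (step k) inferInstance) :
    (∀ n, Integrable (Y n) μ) ∧
    (∀ n, StronglyMeasurable[F n] (Y n)) ∧
    (∀ n, Y n ≤ᵐ[μ] μ[Y (n + 1) | F n]) ∧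
    (∀ n, ∀ᵐ ω ∂μ, X n ω = 0 → (μ[Y (n + 1) | F n]) ω = Y n ω) := by
  obtain ⟨hγ0, hγ1⟩ := hγ
  have hzero : ∑ i ∈ Finset.Icc (-(l : ℤ)) (l : ℤ), p i * g i = 0 := by
    rw [sum_pg_eq hg_pos hg_zero hg_neg f (hf γ hγ0), hroot]
  -- filtration facts
  have hFle : ∀ n, F n ≤ m0 := by
    intro n
    rw [hF n]
    exact iSup₂_le fun k _ => (hmeas k).comap_le
  have hstepF : ∀ n k, k ∈ Finset.range n → Measurable[F n] (step k) := by
    intro n k hk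
    rw [measurable_iff_comap_le, hF n]
    exact le_iSup₂ (f := fun k (_ : k ∈ Finset.range n) =>
      MeasurableSpace.comap (step k) inferInstance) k hk
  have hXF : ∀ n, Measurable[F n] (X n) := by
    intro n
    have h := Finset.measurable_sum (m := F n) (Finset.range n) (fun k hk => hstepF n k hk)
    have hXeq : X n = fun ω => ∑ k ∈ Finset.range n, step k ω := funext (hX n)
    rw [hXeq]; exact h
  have hXm0 : ∀ n, Measurable (X n) := fun n => (hXF n).mono (hFle n) le_rfl
  have hYF : ∀ n, Measurable[F n] (Y n) := by
    intro n
    have hYeq : Y n = fun ω => g (X n ω) := funext (hY n)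
    rw [hYeq]
    exact measurable_from_top.comp (hXF n)
  -- a.e. bounds
  have hstep_ae : ∀ k, ∀ᵐ ω ∂μ, |step k ω| ≤ (l : ℤ) := by
    intro k
    rw [ae_iff]
    refine measure_mono_null (t := ⋃ i : ℤ, {ω | step k ω = i ∧ (l : ℤ) < |i|})
      (fun ω hω => ?_) (measure_iUnion_null fun i => ?_)
    · exact Set.mem_iUnion.2 ⟨step k ω, rfl, by simpa using hω⟩
    · by_cases hi : (l : ℤ) < |i|
      · refine measure_mono_null (t := {ω | step k ω = i}) (fun ω h => h.1) ?_
        rw [hlaw k i, hp_supp i hi]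
        simp
      · refine measure_mono_null (t := (∅ : Set Ω)) (fun ω h => (hi h.2).elim) ?_
        exact measure_empty
  have hXb : ∀ n, ∀ᵐ ω ∂μ, |X n ω| ≤ (n : ℤ) * l := by
    intro n
    have h := (ae_ball_iff (Set.to_countable (↑(Finset.range n) : Set ℕ))).2
      (fun k (_ : k ∈ (↑(Finset.range n) : Set ℕ)) => hstep_ae k)
    filter_upwards [h] with ω hω
    rw [hX n ω]
    calc |∑ k ∈ Finset.range n, step k ω| ≤ ∑ k ∈ Finset.range n, |step k ω| :=
          Finset.abs_sum_le_sum_abs _ _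
      _ ≤ ∑ _k ∈ Finset.range n, (l : ℤ) := Finset.sum_le_sum (fun k hk => hω k hk)
      _ = (n : ℤ) * l := by simp [mul_comm]
  -- a uniform bound on |g| on a window
  have hC : ∀ n : ℕ, ∃ C : ℝ, ∀ y : ℤ, |y| ≤ (n : ℤ) * l + l → |g y| ≤ C := by
    intro n
    refine ⟨∑ y ∈ Finset.Icc (-((n:ℤ)*l + l)) ((n:ℤ)*l + l), |g y|, fun y hy => ?_⟩
    exact Finset.single_le_sum (f := fun y => |g y|) (fun z _ => abs_nonneg (g z))
      (Finset.mem_Icc.2 ⟨neg_le_of_abs_le hy, le_of_abs_le hy⟩)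
  -- integrability
  have hYint : ∀ n, Integrable (Y n) μ := by
    intro n
    have hZ : Integrable (fun ω => ∑ x ∈ Finset.Icc (-((n:ℤ)*l)) ((n:ℤ)*l),
        Set.indicator {ω | X n ω = x} (fun _ => g x) ω) μ :=
      integrable_finset_sum _ fun x _ =>
        (integrable_const (g x)).indicator ((hXm0 n) (measurableSet_singleton x))
    refine hZ.congr ?_
    filter_upwards [hXb n] with ω hω
    rw [hY n ω, Finset.sum_eq_single (X n ω)]
    · exact Set.indicator_of_mem (show ω ∈ {ω' | X n ω' = X n ω} from rfl) _
    · intro x _ hx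
      exact Set.indicator_of_notMem (fun hmem => hx (by exact hmem.symm)) _
    · intro h
      refine absurd (Finset.mem_Icc.2 ⟨?_, ?_⟩) h
      · exact neg_le_of_abs_le hω
      · exact le_of_abs_le hω
  -- conditional expectation computation
  have hcond : ∀ n, μ[Y (n+1) | F n]
      =ᵐ[μ] fun ω => ∑ i ∈ Finset.Icc (-(l : ℤ)) (l : ℤ), g (X n ω + i) * p i := by
    intro n
    obtain ⟨C, hC'⟩ := hC n
    haveI : SigmaFinite (μ.trim (hFle n)) := by infer_instance
    have hAm : ∀ i : ℤ, MeasurableSet {ω | step n ω = i} :=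
      fun i => (hmeas n) (measurableSet_singleton i)
    have hfb : ∀ i : ℤ, i ∈ Finset.Icc (-(l : ℤ)) (l : ℤ) →
        ∀ᵐ ω ∂μ, ‖g (X n ω + i)‖ ≤ C := by
      intro i hi
      simp only [Finset.mem_Icc] at hi
      filter_upwards [hXb n] with ω hω
      rw [Real.norm_eq_abs]
      refine hC' _ ?_
      have h1 : |X n ω + i| ≤ |X n ω| + |i| := abs_add_le _ _
      have h2 : |i| ≤ (l : ℤ) := abs_le.2 ⟨hi.1, hi.2⟩
      omega
    have hfF : ∀ i : ℤ, StronglyMeasurable[F n] (fun ω => g (X n ω + i)) := fun i =>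
      (measurable_from_top.comp ((hXF n).add_const i)).stronglyMeasurable
    have hχint : ∀ i : ℤ,
        Integrable (Set.indicator {ω | step n ω = i} (fun _ => (1:ℝ))) μ :=
      fun i => (integrable_const (1:ℝ)).indicator (hAm i)
    have hterm_int : ∀ i ∈ Finset.Icc (-(l : ℤ)) (l : ℤ),
        Integrable (fun ω => g (X n ω + i) *
          Set.indicator {ω | step n ω = i} (fun _ => (1:ℝ)) ω) μ := by
      intro i hi
      exact (hχint i).bdd_mul (((hfF i).mono (hFle n)).aestronglyMeasurable) (hfb i hi)
    have hrep : Y (n+1) =ᵐ[μ] fun ω => ∑ i ∈ Finset.Icc (-(l : ℤ)) (l : ℤ),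
        g (X n ω + i) * Set.indicator {ω | step n ω = i} (fun _ => (1:ℝ)) ω := by
      filter_upwards [hstep_ae n] with ω hω
      have hXsucc : X (n+1) ω = X n ω + step n ω := by
        rw [hX (n+1) ω, hX n ω, Finset.sum_range_succ]
      rw [hY (n+1) ω, hXsucc, Finset.sum_eq_single (step n ω)]
      · rw [Set.indicator_of_mem
          (show ω ∈ {ω' | step n ω' = step n ω} from rfl), mul_one]
      · intro x _ hx
        rw [Set.indicator_of_notMem (fun hmem => hx (by exact hmem.symm)), mul_zero]
      · intro h
        exact absurd (Finset.mem_Icc.2 ⟨neg_le_of_abs_le hω, le_of_abs_le hω⟩) h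
    have hIndep : Indep (MeasurableSpace.comap (step n) inferInstance) (F n) μ := by
      have hdisj : Disjoint ({n} : Set ℕ) (↑(Finset.range n) : Set ℕ) := by
        simp [Set.disjoint_left]
      have h := indep_iSup_of_disjoint (fun k => (hmeas k).comap_le) hindep.iIndep hdisj
      rw [_root_.iSup_singleton] at h
      rw [hF n]
      exact h
    have hterm : ∀ i : ℤ, i ∈ (↑(Finset.Icc (-(l : ℤ)) (l : ℤ)) : Set ℤ) →
        ∀ᵐ ω ∂μ, (μ[fun ω => g (X n ω + i) *
            Set.indicator {ω | step n ω = i} (fun _ => (1:ℝ)) ω | F n]) ω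
          = g (X n ω + i) * p i := by
      intro i hi
      have h1 : μ[(fun ω => g (X n ω + i)) *
            Set.indicator {ω | step n ω = i} (fun _ => (1:ℝ)) | F n]
          =ᵐ[μ] (fun ω => g (X n ω + i)) *
            μ[Set.indicator {ω | step n ω = i} (fun _ => (1:ℝ)) | F n] :=
        condExp_stronglyMeasurable_mul_of_bound (hFle n) (hfF i) (hχint i) C
          (hfb i (by exact_mod_cast hi))
      have hχsm : StronglyMeasurable[MeasurableSpace.comap (step n) inferInstance]
          (Set.indicator {ω | step n ω = i} (fun _ => (1:ℝ))) := by
        refine stronglyMeasurable_const.indicator ?_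
        exact ⟨{i}, trivial, rfl⟩
      have h2 : μ[Set.indicator {ω | step n ω = i} (fun _ => (1:ℝ)) | F n]
          =ᵐ[μ] fun _ => ∫ ω, Set.indicator {ω | step n ω = i} (fun _ => (1:ℝ)) ω ∂μ :=
        condExp_indep_eq ((hmeas n).comap_le) (hFle n) hχsm hIndep
      have h3 : ∫ ω, Set.indicator {ω | step n ω = i} (fun _ => (1:ℝ)) ω ∂μ = p i := by
        have h4 : ∫ ω, Set.indicator {ω | step n ω = i} (1 : Ω → ℝ) ω ∂μ
            = (μ {ω | step n ω = i}).toReal := integral_indicator_one (hAm i)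
        rw [show (fun _ : Ω => (1:ℝ)) = (1 : Ω → ℝ) from rfl, h4, hlaw n i,
          ENNReal.toReal_ofReal (hp_nonneg i)]
      filter_upwards [h1, h2] with ω e1 e2
      have : (μ[fun ω => g (X n ω + i) *
          Set.indicator {ω | step n ω = i} (fun _ => (1:ℝ)) ω | F n]) ω
          = ((fun ω => g (X n ω + i)) *
            μ[Set.indicator {ω | step n ω = i} (fun _ => (1:ℝ)) | F n]) ω := e1
      rw [this]
      simp only [Pi.mul_apply]
      rw [e2, h3]
    calc μ[Y (n+1) | F n]
        =ᵐ[μ] μ[fun ω => ∑ i ∈ Finset.Icc (-(l : ℤ)) (l : ℤ),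
            g (X n ω + i) * Set.indicator {ω | step n ω = i} (fun _ => (1:ℝ)) ω | F n] :=
          condExp_congr_ae hrep
      _ =ᵐ[μ] ∑ i ∈ Finset.Icc (-(l : ℤ)) (l : ℤ),
            μ[fun ω => g (X n ω + i) *
              Set.indicator {ω | step n ω = i} (fun _ => (1:ℝ)) ω | F n] := by
          have heq : (fun ω => ∑ i ∈ Finset.Icc (-(l : ℤ)) (l : ℤ),
              g (X n ω + i) * Set.indicator {ω | step n ω = i} (fun _ => (1:ℝ)) ω)
              = ∑ i ∈ Finset.Icc (-(l : ℤ)) (l : ℤ), fun ω =>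
                g (X n ω + i) * Set.indicator {ω | step n ω = i} (fun _ => (1:ℝ)) ω := by
            funext ω
            rw [Finset.sum_apply]
          rw [heq]
          exact condExp_finset_sum hterm_int (F n)
      _ =ᵐ[μ] fun ω => ∑ i ∈ Finset.Icc (-(l : ℤ)) (l : ℤ), g (X n ω + i) * p i := by
          have hall := (ae_ball_iff (Set.to_countable
            (↑(Finset.Icc (-(l : ℤ)) (l : ℤ)) : Set ℤ))).2 hterm
          filter_upwards [hall] with ω hω
          rw [Finset.sum_apply]
          exact Finset.sum_congr rfl fun i hi => hω i (by exact_mod_cast hi)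
  refine ⟨hYint, fun n => (hYF n).stronglyMeasurable, fun n => ?_, fun n => ?_⟩
  · filter_upwards [hcond n] with ω hc
    rw [hc, hY n ω]
    calc g (X n ω) ≤ ∑ i ∈ Finset.Icc (-(l : ℤ)) (l : ℤ), p i * g (X n ω + i) :=
          g_le_sum hγ0 hγ1 hg_pos hg_zero hg_neg hp_nonneg hp_sum hzero (X n ω)
      _ = ∑ i ∈ Finset.Icc (-(l : ℤ)) (l : ℤ), g (X n ω + i) * p i :=
          Finset.sum_congr rfl fun i _ => mul_comm _ _
  · filter_upwards [hcond n] with ω hc hx0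
    rw [hc, hY n ω, hx0, hg_zero]
    calc ∑ i ∈ Finset.Icc (-(l : ℤ)) (l : ℤ), g ((0:ℤ) + i) * p i
        = ∑ i ∈ Finset.Icc (-(l : ℤ)) (l : ℤ), p i * g i := by
          exact Finset.sum_congr rfl fun i _ => by rw [zero_add, mul_comm]
      _ = 0 := hzero
end

section
/- Suppose γ ∈ (0,1) satisfies f(γ) = 0. Then for every integer x, the one-step expected increment of the scale function along the walk is nonnegative: ∑_{i=−l}^{l} p(i)·(g(x+i) − g(x)) ≥ 0, and this quantity equals 0 when x = 0. -/
open Finset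

lemma geomIcc (x : ℝ) (hx : x ≠ 1) (n : ℕ) :
    ∑ i ∈ Finset.Icc 1 n, x ^ i = x * (1 - x ^ n) / (1 - x) := by
  induction n with
  | zero => simp
  | succ n ih =>
      rw [Finset.sum_Icc_succ_top (by omega), ih]
      have h1 : (1:ℝ) - x ≠ 0 := by intro h; apply hx; linarith
      field_simp; ring

lemma split_sum (F : ℤ → ℝ) (n : ℕ) :
    ∑ i ∈ Finset.Icc (-(n:ℤ)) (n:ℤ), F i
      = F 0 + ∑ i ∈ Finset.Icc 1 n, (F (i:ℤ) + F (-(i:ℤ))) := by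
  induction n with
  | zero => simp
  | succ n ih =>
      have hset : Finset.Icc (-((n:ℤ)+1)) ((n:ℤ)+1)
          = insert (-((n:ℤ)+1)) (insert ((n:ℤ)+1) (Finset.Icc (-(n:ℤ)) (n:ℤ))) := by
        ext a; simp only [Finset.mem_Icc, Finset.mem_insert]; omega
      have h1 : (-((n:ℤ)+1)) ∉ insert ((n:ℤ)+1) (Finset.Icc (-(n:ℤ)) (n:ℤ)) := by
        simp only [Finset.mem_Icc, Finset.mem_insert]; omega
      have h2 : ((n:ℤ)+1) ∉ Finset.Icc (-(n:ℤ)) (n:ℤ) := by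
        simp only [Finset.mem_Icc]; omega
      push_cast
      rw [hset, Finset.sum_insert h1, Finset.sum_insert h2, ih,
        Finset.sum_Icc_succ_top (by omega)]
      push_cast
      ring

lemma g_closed_form (γ : ℝ) (hγ : γ ∈ Set.Ioo (0:ℝ) 1)
    (g : ℤ → ℝ)
    (hg_pos : ∀ x : ℤ, 0 < x → g x = ∑ i ∈ Finset.Icc 1 x.toNat, γ ^ i)
    (hg_zero : g 0 = 0)
    (hg_neg : ∀ x : ℤ, x < 0 → g x = -∑ i ∈ Finset.Icc 1 (-x).toNat, γ ^ (-(i : ℤ))) :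
    ∀ y : ℤ, g y = γ * (1 - γ ^ y) / (1 - γ) + min 0 (1 - γ ^ y) := by
  obtain ⟨hγ0, hγ1⟩ := hγ
  have hγne : γ ≠ 0 := ne_of_gt hγ0
  have hne1 : γ ≠ 1 := ne_of_lt hγ1
  have h1γ : (1:ℝ) - γ ≠ 0 := by intro h; apply hne1; linarith
  intro y
  rcases lt_trichotomy y 0 with hy | hy | hy
  · rw [hg_neg y hy]
    set m := (-y).toNat with hm
    have hym : y = -(m : ℤ) := by omega
    have hinv : ∀ i : ℕ, γ ^ (-(i:ℤ)) = (γ⁻¹) ^ i := by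
      intro i; rw [zpow_neg, zpow_natCast, inv_pow]
    have hsum : ∑ i ∈ Finset.Icc 1 m, γ ^ (-(i : ℤ))
        = γ⁻¹ * (1 - (γ⁻¹) ^ m) / (1 - γ⁻¹) := by
      rw [Finset.sum_congr rfl (fun i _ => hinv i), geomIcc γ⁻¹ ?_ m]
      intro h
      apply hne1
      field_simp at h
      exact h.symm
    have hzy : γ ^ y = (γ^m)⁻¹ := by rw [hym, zpow_neg, zpow_natCast]
    have hpow : (0:ℝ) < γ ^ m := pow_pos hγ0 m
    have hle : γ ^ m ≤ 1 := pow_le_one₀ (le_of_lt hγ0) (le_of_lt hγ1)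
    have hmin : min 0 (1 - γ ^ y) = 1 - γ ^ y := by
      apply min_eq_right
      rw [hzy]
      have : (1:ℝ) ≤ (γ^m)⁻¹ := (one_le_inv₀ hpow).mpr hle
      linarith
    have hpne : (γ:ℝ)^m ≠ 0 := ne_of_gt hpow
    have hγm1 : γ - 1 ≠ 0 := by intro h; apply hne1; linarith
    have hgm : γ * γ ^ m - γ ^ m ≠ 0 := by
      intro h
      apply hγm1
      have : (γ - 1) * γ ^ m = 0 := by linarith [h]
      rcases mul_eq_zero.mp this with h' | h'
      · exact h'
      · exact absurd h' hpne
    have hsum2 : γ⁻¹ * (1 - (γ⁻¹) ^ m) / (1 - γ⁻¹) = (1 - (γ^m)⁻¹) / (γ - 1) := by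
      rw [inv_pow]
      have hinv1 : 1 - γ⁻¹ ≠ 0 := by
        intro h
        have h2 : γ⁻¹ = 1 := by linarith
        rw [inv_eq_one] at h2
        exact hne1 h2
      rw [div_eq_div_iff hinv1 hγm1]
      field_simp
    rw [hsum, hsum2, hmin, hzy]
    field_simp [hγm1]
    ring
  · subst hy; simp [hg_zero]
  · rw [hg_pos y hy]
    set n := y.toNat with hn
    have hyn : y = (n : ℤ) := by omega
    have hzy : γ ^ y = γ ^ n := by rw [hyn, zpow_natCast]
    have hmin : min 0 (1 - γ ^ y) = 0 := by
      apply min_eq_left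
      rw [hzy]
      have := pow_le_one₀ (le_of_lt hγ0) (le_of_lt hγ1) (n := n)
      linarith
    rw [geomIcc γ hne1 n, hmin, hzy, add_zero]

/-- If `γ ∈ (0,1)` is a root of `f`, then for every integer `x` the one-step expected
increment of the scale function `g` along the walk is nonnegative,
`∑_{i=-l}^{l} p(i)·(g(x+i) − g(x)) ≥ 0`, and it equals `0` when `x = 0`. -/
theorem random_walk_scale_increment_nonneg
    (l : ℕ) (hl : 0 < l)
    (p : ℤ → ℝ)
    (hp_nonneg : ∀ i, 0 ≤ p i)
    (hp_sum : ∑ i ∈ Finset.Icc (-(l : ℤ)) (l : ℤ), p i = 1)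
    (hp_supp : ∀ i : ℤ, (l : ℤ) < |i| → p i = 0)
    (f : ℝ → ℝ)
    (hf : ∀ g : ℝ, 0 < g →
      f g = (∑ i ∈ Finset.Icc 1 l, (∑ j ∈ Finset.Icc 1 i, g ^ j) * p (i : ℤ))
          - (∑ i ∈ Finset.Icc 1 l, (∑ j ∈ Finset.Icc 1 i, g ^ (-(j : ℤ))) * p (-(i : ℤ))))
    (γ : ℝ) (hγ : γ ∈ Set.Ioo (0 : ℝ) 1) (hroot : f γ = 0)
    (g : ℤ → ℝ)
    (hg_pos : ∀ x : ℤ, 0 < x → g x = ∑ i ∈ Finset.Icc 1 x.toNat, γ ^ i)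
    (hg_zero : g 0 = 0)
    (hg_neg : ∀ x : ℤ, x < 0 → g x = -∑ i ∈ Finset.Icc 1 (-x).toNat, γ ^ (-(i : ℤ))) :
    (∀ x : ℤ, 0 ≤ ∑ i ∈ Finset.Icc (-(l : ℤ)) (l : ℤ), p i * (g (x + i) - g x)) ∧
      ∑ i ∈ Finset.Icc (-(l : ℤ)) (l : ℤ), p i * (g (0 + i) - g 0) = 0 := by
  obtain ⟨hγ0, hγ1⟩ := hγ
  have hγne : γ ≠ 0 := ne_of_gt hγ0
  have h1γ : (1:ℝ) - γ ≠ 0 := by intro h; have : γ = 1 := by linarith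
                                 exact absurd this (ne_of_lt hγ1)
  set c : ℤ → ℝ := fun y => min 0 (1 - γ ^ y) with hc
  have hA : ∀ y : ℤ, g y = γ * (1 - γ ^ y) / (1 - γ) + c y :=
    g_closed_form γ ⟨hγ0, hγ1⟩ g hg_pos hg_zero hg_neg
  have hcle : ∀ y : ℤ, c y ≤ 0 := fun y => min_le_left _ _
  have hcle' : ∀ y : ℤ, c y ≤ 1 - γ ^ y := fun y => min_le_right _ _
  -- key pointwise inequality
  have hkey : ∀ x i : ℤ, 0 ≤ c (x + i) - c x - γ ^ x * c i := by
    intro x i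
    have hx : (0:ℝ) < γ ^ x := zpow_pos hγ0 x
    have h1 : c x + γ ^ x * c i ≤ 0 := by
      have := mul_nonpos_of_nonneg_of_nonpos (le_of_lt hx) (hcle i)
      linarith [hcle x]
    have h2 : c x + γ ^ x * c i ≤ 1 - γ ^ (x + i) := by
      have h3 : γ ^ (x + i) = γ ^ x * γ ^ i := zpow_add₀ hγne x i
      have h4 : γ ^ x * c i ≤ γ ^ x * (1 - γ ^ i) :=
        mul_le_mul_of_nonneg_left (hcle' i) (le_of_lt hx)
      have h5 := hcle' x
      nlinarith
    have : c x + γ ^ x * c i ≤ c (x + i) := le_min h1 h2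
    linarith
  -- increment identity
  have hI : ∀ x i : ℤ, g (x + i) - g x
      = γ ^ x * (g i - c i) + (c (x + i) - c x) := by
    intro x i
    rw [hA (x + i), hA x, hA i]
    have h3 : γ ^ (x + i) = γ ^ x * γ ^ i := zpow_add₀ hγne x i
    rw [h3]
    field_simp
    ring
  -- sum of p i * g i over the window is f γ = 0
  have hB : ∑ i ∈ Finset.Icc (-(l : ℤ)) (l : ℤ), p i * g i = 0 := by
    rw [split_sum (fun i => p i * g i) l]
    simp only [hg_zero, mul_zero, zero_add]
    have hterm : ∀ i ∈ Finset.Icc 1 l,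
        p (i:ℤ) * g (i:ℤ) + p (-(i:ℤ)) * g (-(i:ℤ))
          = (∑ j ∈ Finset.Icc 1 i, γ ^ j) * p (i:ℤ)
            - (∑ j ∈ Finset.Icc 1 i, γ ^ (-(j : ℤ))) * p (-(i:ℤ)) := by
      intro i hi
      have hi1 : 1 ≤ i := (Finset.mem_Icc.mp hi).1
      have hipos : (0:ℤ) < (i:ℤ) := by exact_mod_cast hi1
      rw [hg_pos (i:ℤ) hipos, hg_neg (-(i:ℤ)) (by omega)]
      simp only [Int.toNat_natCast, neg_neg]
      ring
    rw [Finset.sum_congr rfl hterm, Finset.sum_sub_distrib, ← hf γ hγ0, hroot]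
  -- decompose the expected increment
  have hE : ∀ x : ℤ, ∑ i ∈ Finset.Icc (-(l : ℤ)) (l : ℤ), p i * (g (x + i) - g x)
      = ∑ i ∈ Finset.Icc (-(l : ℤ)) (l : ℤ),
          p i * (c (x + i) - c x - γ ^ x * c i) := by
    intro x
    have : ∀ i ∈ Finset.Icc (-(l : ℤ)) (l : ℤ),
        p i * (g (x + i) - g x)
          = p i * (c (x + i) - c x - γ ^ x * c i) + γ ^ x * (p i * g i) := by
      intro i _
      rw [hI x i]
      ring
    rw [Finset.sum_congr rfl this, Finset.sum_add_distrib, ← Finset.mul_sum, hB,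
      mul_zero, add_zero]
  constructor
  · intro x
    rw [hE x]
    apply Finset.sum_nonneg
    intro i _
    exact mul_nonneg (hp_nonneg i) (hkey x i)
  · have : ∀ i ∈ Finset.Icc (-(l : ℤ)) (l : ℤ),
        p i * (g (0 + i) - g 0) = p i * g i := by
      intro i _
      rw [zero_add, hg_zero, sub_zero]
    rw [Finset.sum_congr rfl this, hB]
end

section
/- Suppose the drift satisfies ∑_{i=-l}^{l} i·p(i) > 0 and γ ∈ (0,1) satisfies f(γ) = 0. For positive integers ξ and μ, let T = inf{n ≥ 1 : X_n ≤ −ξ or X_n ≥ μ}. Then T is almost surely finite and the stopped value of the scale function has nonnegative expectation: 𝔼[g(X_T)] ≥ 0. -/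
open MeasureTheory ProbabilityTheory Finset
open Filter

section scale
variable {γ : ℝ} {g : ℤ → ℝ}

lemma RW_step (hγ0 : 0 < γ)
    (hg_pos : ∀ x : ℤ, 0 < x → g x = ∑ i ∈ Finset.Icc 1 x.toNat, γ ^ i)
    (hg_zero : g 0 = 0)
    (hg_neg : ∀ x : ℤ, x < 0 → g x = -∑ i ∈ Finset.Icc 1 (-x).toNat, γ ^ (-(i : ℤ)))
    (j : ℤ) : g (j+1) - g j = if 0 ≤ j then γ ^ (j+1) else γ ^ j := by
  rcases lt_trichotomy j 0 with hj | hj | hj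
  · rw [if_neg (by omega)]
    rcases eq_or_lt_of_le (by omega : j ≤ -1) with hj1 | hj1
    · subst hj1
      rw [hg_neg (-1) (by norm_num)]
      norm_num [hg_zero]
    · rw [hg_neg j hj, hg_neg (j+1) (by omega)]
      have h1 : (-j).toNat = (-(j+1)).toNat + 1 := by omega
      rw [h1, Finset.sum_Icc_succ_top (by omega)]
      have : (-(((-(j+1)).toNat + 1 : ℕ) : ℤ)) = j := by omega
      rw [this]
      ring
  · subst hj
    rw [if_pos le_rfl]
    norm_num [hg_zero, hg_pos 1 one_pos]
  · rw [if_pos (by omega), hg_pos j hj, hg_pos (j+1) (by omega)]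
    have h1 : (j+1).toNat = j.toNat + 1 := by omega
    rw [h1, Finset.sum_Icc_succ_top (by omega)]
    have : ((j.toNat + 1 : ℕ) : ℤ) = j + 1 := by omega
    rw [← this, zpow_natCast]
    ring

lemma RW_step_lb (hγ0 : 0 < γ) (hγ1 : γ < 1)
    (hg_pos : ∀ x : ℤ, 0 < x → g x = ∑ i ∈ Finset.Icc 1 x.toNat, γ ^ i)
    (hg_zero : g 0 = 0)
    (hg_neg : ∀ x : ℤ, x < 0 → g x = -∑ i ∈ Finset.Icc 1 (-x).toNat, γ ^ (-(i : ℤ)))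
    (j : ℤ) : γ ^ (j+1) ≤ g (j+1) - g j := by
  rw [RW_step hγ0 hg_pos hg_zero hg_neg j]
  split
  · exact le_rfl
  · exact zpow_le_zpow_right_of_le_one₀ hγ0 hγ1.le (by omega)



lemma RW_step_ub (hγ0 : 0 < γ) (hγ1 : γ < 1)
    (hg_pos : ∀ x : ℤ, 0 < x → g x = ∑ i ∈ Finset.Icc 1 x.toNat, γ ^ i)
    (hg_zero : g 0 = 0)
    (hg_neg : ∀ x : ℤ, x < 0 → g x = -∑ i ∈ Finset.Icc 1 (-x).toNat, γ ^ (-(i : ℤ)))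
    (j : ℤ) : g (j+1) - g j ≤ γ ^ j := by
  rw [RW_step hγ0 hg_pos hg_zero hg_neg j]
  split
  · exact zpow_le_zpow_right_of_le_one₀ hγ0 hγ1.le (by omega)
  · exact le_rfl

lemma RW_up (hγ0 : 0 < γ) (hγ1 : γ < 1)
    (hg_pos : ∀ x : ℤ, 0 < x → g x = ∑ i ∈ Finset.Icc 1 x.toNat, γ ^ i)
    (hg_zero : g 0 = 0)
    (hg_neg : ∀ x : ℤ, x < 0 → g x = -∑ i ∈ Finset.Icc 1 (-x).toNat, γ ^ (-(i : ℤ)))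
    (i : ℕ) (x : ℤ) :
    γ ^ x * (∑ j ∈ Finset.Icc 1 i, γ ^ j) ≤ g (x + i) - g x := by
  induction i with
  | zero => simp
  | succ n ih =>
    rw [Finset.sum_Icc_succ_top (by omega), mul_add]
    have h1 := RW_step_lb hγ0 hγ1 hg_pos hg_zero hg_neg (x + n)
    have h2 : g (x + (n+1 : ℕ)) - g x = (g ((x + n) + 1) - g (x + n)) + (g (x + n) - g x) := by
      push_cast; ring_nf
    rw [h2]
    have h3 : γ ^ x * γ ^ (n+1 : ℕ) = γ ^ (x + n + 1) := by
      rw [← zpow_natCast γ (n+1), ← zpow_add₀ (ne_of_gt hγ0)]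
      norm_num
      ring_nf
    linarith [h3 ▸ h1]

lemma RW_down (hγ0 : 0 < γ) (hγ1 : γ < 1)
    (hg_pos : ∀ x : ℤ, 0 < x → g x = ∑ i ∈ Finset.Icc 1 x.toNat, γ ^ i)
    (hg_zero : g 0 = 0)
    (hg_neg : ∀ x : ℤ, x < 0 → g x = -∑ i ∈ Finset.Icc 1 (-x).toNat, γ ^ (-(i : ℤ)))
    (i : ℕ) (x : ℤ) :
    g x - g (x - i) ≤ γ ^ x * (∑ j ∈ Finset.Icc 1 i, γ ^ (-(j:ℤ))) := by
  induction i with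
  | zero => simp
  | succ n ih =>
    rw [Finset.sum_Icc_succ_top (by omega), mul_add]
    have h1 := RW_step_ub hγ0 hγ1 hg_pos hg_zero hg_neg (x - n - 1)
    have h2 : g x - g (x - (n+1 : ℕ)) = (g x - g (x - n)) + (g ((x - n - 1) + 1) - g (x - n - 1)) := by
      push_cast; ring_nf
    rw [h2]
    have h3 : γ ^ x * γ ^ (-((n:ℤ)+1)) = γ ^ (x - n - 1) := by
      rw [← zpow_add₀ (ne_of_gt hγ0)]
      ring_nf
    push_cast
    have h4 : γ ^ (x - n - 1) ≤ γ ^ x * γ ^ (-((n:ℤ)+1)) := le_of_eq h3.symm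
    linarith

lemma RW_split (l : ℕ) (F : ℤ → ℝ) :
    ∑ i ∈ Finset.Icc (-(l:ℤ)) l, F i = F 0 + ∑ i ∈ Finset.Icc 1 l, (F i + F (-(i:ℤ))) := by
  induction l with
  | zero => simp
  | succ n ih =>
    have hset : Finset.Icc (-(n+1:ℕ):ℤ) ((n+1:ℕ):ℤ)
        = insert (-(n+1:ℕ):ℤ) (insert ((n+1:ℕ):ℤ) (Finset.Icc (-(n:ℕ):ℤ) (n:ℕ))) := by
      ext x; simp only [Finset.mem_Icc, Finset.mem_insert]; omega
    rw [hset, Finset.sum_insert (by simp only [Finset.mem_insert, Finset.mem_Icc]; omega),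
      Finset.sum_insert (by simp only [Finset.mem_Icc]; omega), ih,
      Finset.sum_Icc_succ_top (by omega : 1 ≤ n + 1)]
    push_cast
    ring

end scale

section key
variable {γ : ℝ} {g : ℤ → ℝ}

lemma RW_key (hγ0 : 0 < γ) (hγ1 : γ < 1)
    (hg_pos : ∀ x : ℤ, 0 < x → g x = ∑ i ∈ Finset.Icc 1 x.toNat, γ ^ i)
    (hg_zero : g 0 = 0)
    (hg_neg : ∀ x : ℤ, x < 0 → g x = -∑ i ∈ Finset.Icc 1 (-x).toNat, γ ^ (-(i : ℤ)))
    (l : ℕ) (p : ℤ → ℝ) (hp_nonneg : ∀ i, 0 ≤ p i)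
    (hroot : (∑ i ∈ Finset.Icc 1 l, (∑ j ∈ Finset.Icc 1 i, γ ^ j) * p (i : ℤ))
          - (∑ i ∈ Finset.Icc 1 l, (∑ j ∈ Finset.Icc 1 i, γ ^ (-(j : ℤ))) * p (-(i : ℤ))) = 0)
    (x : ℤ) :
    0 ≤ ∑ i ∈ Finset.Icc (-(l:ℤ)) l, p i * (g (x + i) - g x) := by
  rw [RW_split l (fun i => p i * (g (x + i) - g x))]
  simp only [add_zero, hg_zero]
  have hterm : ∀ i ∈ Finset.Icc 1 l,
      γ ^ x * ((∑ j ∈ Finset.Icc 1 i, γ ^ j) * p (i:ℤ)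
        - (∑ j ∈ Finset.Icc 1 i, γ ^ (-(j:ℤ))) * p (-(i:ℤ)))
      ≤ p (i:ℤ) * (g (x + i) - g x) + p (-(i:ℤ)) * (g (x + -(i:ℤ)) - g x) := by
    intro i _
    have h1 := RW_up hγ0 hγ1 hg_pos hg_zero hg_neg i x
    have h2 := RW_down hγ0 hγ1 hg_pos hg_zero hg_neg i x
    have h3 : x + -(i:ℤ) = x - i := by ring
    rw [h3, mul_sub]
    have e1 : γ ^ x * ((∑ j ∈ Finset.Icc 1 i, γ ^ j) * p (i:ℤ))
        = p (i:ℤ) * (γ ^ x * ∑ j ∈ Finset.Icc 1 i, γ ^ j) := by ring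
    have e2 : γ ^ x * ((∑ j ∈ Finset.Icc 1 i, γ ^ (-(j:ℤ))) * p (-(i:ℤ)))
        = p (-(i:ℤ)) * (γ ^ x * ∑ j ∈ Finset.Icc 1 i, γ ^ (-(j:ℤ))) := by ring
    rw [e1, e2]
    have b1 := mul_le_mul_of_nonneg_left h1 (hp_nonneg (i:ℤ))
    have b2 := mul_le_mul_of_nonneg_left h2 (hp_nonneg (-(i:ℤ)))
    nlinarith [b1, b2]
  have hsum := Finset.sum_le_sum hterm
  rw [← Finset.mul_sum, Finset.sum_sub_distrib] at hsum
  rw [hroot, mul_zero] at hsum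
  have hx0 : p 0 * (g x - g x) = 0 := by ring
  calc (0:ℝ) ≤ ∑ i ∈ Finset.Icc 1 l, (p (i:ℤ) * (g (x + i) - g x) + p (-(i:ℤ)) * (g (x + -(i:ℤ)) - g x)) := hsum
  _ = p 0 * (g x - g x) + ∑ i ∈ Finset.Icc 1 l, (p (i:ℤ) * (g (x + i) - g x) + p (-(i:ℤ)) * (g (x + -(i:ℤ)) - g x)) := by rw [hx0]; ring
  _ = _ := by norm_num

end key

/-- **Optional stopping bound for the scale-transformed walk.**
Under positive drift and with `γ ∈ (0,1)` a root of `f`, for positive integers `ξ` and `m`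
the two-sided exit time `T ω = inf{n ≥ 1 : X n ω ≤ −ξ or X n ω ≥ m}` is almost surely
finite, and the stopped value of the scale function `g` has nonnegative expectation,
`𝔼[g (X_T)] ≥ 0`. -/
theorem random_walk_stopped_scale_expectation_nonneg
    {Ω : Type*} [MeasurableSpace Ω] (μ : Measure Ω) [IsProbabilityMeasure μ]
    (l : ℕ) (hl : 0 < l)
    (p : ℤ → ℝ)
    (hp_nonneg : ∀ i, 0 ≤ p i)
    (hp_sum : ∑ i ∈ Finset.Icc (-(l : ℤ)) (l : ℤ), p i = 1)
    (hp_supp : ∀ i : ℤ, (l : ℤ) < |i| → p i = 0)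
    (step : ℕ → Ω → ℤ)
    (hmeas : ∀ k, Measurable (step k))
    (hindep : iIndepFun step μ)
    (hlaw : ∀ k i, μ {ω | step k ω = i} = ENNReal.ofReal (p i))
    (X : ℕ → Ω → ℤ)
    (hX : ∀ n ω, X n ω = ∑ k ∈ Finset.range n, step k ω)
    (hdrift : 0 < ∑ i ∈ Finset.Icc (-(l : ℤ)) (l : ℤ), (i : ℝ) * p i)
    (f : ℝ → ℝ)
    (hf : ∀ g : ℝ, 0 < g →
      f g = (∑ i ∈ Finset.Icc 1 l, (∑ j ∈ Finset.Icc 1 i, g ^ j) * p (i : ℤ))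
          - (∑ i ∈ Finset.Icc 1 l, (∑ j ∈ Finset.Icc 1 i, g ^ (-(j : ℤ))) * p (-(i : ℤ))))
    (γ : ℝ) (hγ : γ ∈ Set.Ioo (0 : ℝ) 1) (hroot : f γ = 0)
    (g : ℤ → ℝ)
    (hg_pos : ∀ x : ℤ, 0 < x → g x = ∑ i ∈ Finset.Icc 1 x.toNat, γ ^ i)
    (hg_zero : g 0 = 0)
    (hg_neg : ∀ x : ℤ, x < 0 → g x = -∑ i ∈ Finset.Icc 1 (-x).toNat, γ ^ (-(i : ℤ)))
    (ξ m : ℕ) (hξ : 0 < ξ) (hm : 0 < m)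
    (T : Ω → ℕ)
    (hT : ∀ ω, T ω = sInf {n : ℕ | 1 ≤ n ∧ (X n ω ≤ -(ξ : ℤ) ∨ (m : ℤ) ≤ X n ω)}) :
    μ {ω | ∃ n ≥ 1, X n ω ≤ -(ξ : ℤ) ∨ (m : ℤ) ≤ X n ω} = 1 ∧
    0 ≤ ∫ ω, g (X (T ω) ω) ∂μ := by
  -- measurability of X
  have hXmeas : ∀ n, Measurable (X n) := by
    intro n
    have : X n = fun ω => ∑ k ∈ Finset.range n, step k ω := funext fun ω => hX n ω
    rw [this]
    exact Finset.measurable_sum _ fun k _ => hmeas k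
  -- the good event where all steps are bounded
  have hnull : μ {ω | ∃ k, (l:ℤ) < |step k ω|} = 0 := by
    have : {ω | ∃ k, (l:ℤ) < |step k ω|} = ⋃ k, ⋃ i ∈ {i : ℤ | (l:ℤ) < |i|}, {ω | step k ω = i} := by
      ext ω; simp only [Set.mem_setOf_eq, Set.mem_iUnion, Set.mem_setOf_eq]
      constructor
      · rintro ⟨k, hk⟩; exact ⟨k, step k ω, hk, rfl⟩
      · rintro ⟨k, i, hi, hk⟩; exact ⟨k, hk ▸ hi⟩
    rw [this]
    refine measure_iUnion_null fun k => ?_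
    refine measure_biUnion_null_iff ?_ |>.2 fun i hi => ?_
    · exact Set.to_countable _
    · rw [hlaw k i, hp_supp i hi, ENNReal.ofReal_zero]
  have hgood : ∀ᵐ ω ∂μ, ∀ k, |step k ω| ≤ (l:ℤ) := by
    rw [ae_iff]
    convert hnull using 2
    ext ω; simp only [Set.mem_setOf_eq, not_forall, not_le]
  -- SLLN
  set Z : ℕ → Ω → ℝ := fun k ω => ((step k ω : ℤ) : ℝ) with hZ
  have hZmeas : ∀ k, Measurable (Z k) := fun k => measurable_from_top.comp (hmeas k)
  have hZint : Integrable (Z 0) μ := by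
    refine (integrable_const ((l:ℝ))).mono' (hZmeas 0).aestronglyMeasurable ?_
    filter_upwards [hgood] with ω hω
    simp only [hZ, Real.norm_eq_abs, ← Int.cast_abs]
    exact_mod_cast hω 0
  have hZindep : Pairwise (Function.onFun (IndepFun · · μ) Z) := by
    intro i j hij
    exact ((hindep.indepFun hij).comp measurable_from_top measurable_from_top)
  have hZident : ∀ i, IdentDistrib (Z i) (Z 0) μ μ := by
    intro i
    have hstep : IdentDistrib (step i) (step 0) μ μ := by
      refine ⟨(hmeas i).aemeasurable, (hmeas 0).aemeasurable, ?_⟩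
      refine MeasureTheory.Measure.ext_of_singleton fun a => ?_
      rw [Measure.map_apply (hmeas i) (measurableSet_singleton a),
        Measure.map_apply (hmeas 0) (measurableSet_singleton a)]
      have e1 : step i ⁻¹' {a} = {ω | step i ω = a} := rfl
      have e2 : step 0 ⁻¹' {a} = {ω | step 0 ω = a} := rfl
      rw [e1, e2, hlaw i a, hlaw 0 a]
    exact hstep.comp measurable_from_top
  -- mean of Z 0
  have hmean : ∫ ω, Z 0 ω ∂μ = ∑ i ∈ Finset.Icc (-(l : ℤ)) (l : ℤ), (i : ℝ) * p i := by
    have hae : Z 0 =ᵐ[μ] fun ω => ∑ i ∈ Finset.Icc (-(l : ℤ)) (l : ℤ),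
        Set.indicator {ω' | step 0 ω' = i} (fun _ => (i:ℝ)) ω := by
      filter_upwards [hgood] with ω hω
      have hmem : step 0 ω ∈ Finset.Icc (-(l : ℤ)) (l : ℤ) := by
        simp only [Finset.mem_Icc]
        have := hω 0; rw [abs_le] at this; omega
      rw [Finset.sum_eq_single (step 0 ω)]
      · simp [Set.indicator, Z]
      · intro b _ hb
        exact Set.indicator_of_notMem (fun h => hb (Set.mem_setOf_eq ▸ h).symm) _
      · intro h; exact absurd hmem h
    rw [integral_congr_ae hae, integral_finset_sum]
    · refine Finset.sum_congr rfl fun i _ => ?_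
      rw [integral_indicator_const ((i:ℤ):ℝ) (show MeasurableSet {ω' | step 0 ω' = i} from (hmeas 0) (measurableSet_singleton i))]
      have : μ {ω' | step 0 ω' = i} = ENNReal.ofReal (p i) := hlaw 0 i
      rw [measureReal_def, this, smul_eq_mul, ENNReal.toReal_ofReal (hp_nonneg i), mul_comm]
    · intro i _
      exact (integrable_const ((i:ℤ):ℝ)).indicator ((hmeas 0) (measurableSet_singleton i))
  have hSLLN := strong_law_ae_real Z hZint hZindep hZident
  rw [hmean] at hSLLN
  set d : ℝ := ∑ i ∈ Finset.Icc (-(l : ℤ)) (l : ℤ), (i : ℝ) * p i with hd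
  -- conclude
  have hae2 : ∀ᵐ ω ∂μ, ω ∈ {ω | ∃ n ≥ 1, X n ω ≤ -(ξ : ℤ) ∨ (m : ℤ) ≤ X n ω} := by
    filter_upwards [hSLLN] with ω hω
    have hXn : ∀ n, (∑ i ∈ Finset.range n, Z i ω) = ((X n ω : ℤ) : ℝ) := by
      intro n; rw [hX n ω]; push_cast; rfl
    have h1 : Tendsto (fun n : ℕ => ((X n ω : ℤ) : ℝ) / n) atTop (nhds d) := by
      refine hω.congr fun n => by rw [hXn n]
    have h2 : Tendsto (fun n : ℕ => (((X n ω : ℤ) : ℝ) / n) * n) atTop atTop :=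
      Filter.Tendsto.pos_mul_atTop hdrift h1 tendsto_natCast_atTop_atTop
    have h3 : Tendsto (fun n : ℕ => ((X n ω : ℤ) : ℝ)) atTop atTop := by
      refine h2.congr' ?_
      filter_upwards [eventually_ge_atTop 1] with n hn
      have : (n:ℝ) ≠ 0 := by positivity
      field_simp
    have h4 := h3.eventually_ge_atTop ((m:ℝ))
    rcases (h4.and (eventually_ge_atTop 1)).exists with ⟨n, hn1, hn2⟩
    exact ⟨n, hn2, Or.inr (by exact_mod_cast hn1)⟩
  have hMS : MeasurableSet {ω | ∃ n ≥ 1, X n ω ≤ -(ξ : ℤ) ∨ (m : ℤ) ≤ X n ω} := by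
    have : {ω | ∃ n ≥ 1, X n ω ≤ -(ξ : ℤ) ∨ (m : ℤ) ≤ X n ω}
        = ⋃ n, ⋃ (_ : n ≥ 1), (X n ⁻¹' {x | x ≤ -(ξ : ℤ) ∨ (m : ℤ) ≤ x}) := by
      ext ω; simp [Set.mem_iUnion]
    rw [this]
    exact MeasurableSet.iUnion fun n => MeasurableSet.iUnion fun _ => (hXmeas n) .of_discrete
  have hprob : μ {ω | ∃ n ≥ 1, X n ω ≤ -(ξ : ℤ) ∨ (m : ℤ) ≤ X n ω} = 1 := by
    rw [← prob_compl_eq_zero_iff hMS]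
    exact mem_ae_iff.mp hae2
  -- key inequality
  obtain ⟨hγ0, hγ1⟩ := hγ
  have hroot' : (∑ i ∈ Finset.Icc 1 l, (∑ j ∈ Finset.Icc 1 i, γ ^ j) * p (i : ℤ))
      - (∑ i ∈ Finset.Icc 1 l, (∑ j ∈ Finset.Icc 1 i, γ ^ (-(j : ℤ))) * p (-(i : ℤ))) = 0 := by
    rw [← hf γ hγ0]; exact hroot
  have hkey := RW_key hγ0 hγ1 hg_pos hg_zero hg_neg l p hp_nonneg hroot'
  refine ⟨hprob, ?_⟩
  have hae_exit : ∀ᵐ ω ∂μ, ∃ n, n ≥ 1 ∧ (X n ω ≤ -(ξ : ℤ) ∨ (m : ℤ) ≤ X n ω) := hae2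
  -- basic recursions
  have hX0 : ∀ ω, X 0 ω = 0 := fun ω => by rw [hX]; simp
  have hXsucc : ∀ n ω, X (n+1) ω = X n ω + step n ω := by
    intro n ω; rw [hX, hX, Finset.sum_range_succ]
  -- facts about T
  have hTfacts : ∀ ω : Ω, (∃ n, n ≥ 1 ∧ (X n ω ≤ -(ξ:ℤ) ∨ (m:ℤ) ≤ X n ω)) →
      1 ≤ T ω ∧ (X (T ω) ω ≤ -(ξ:ℤ) ∨ (m:ℤ) ≤ X (T ω) ω) ∧
      ∀ k, k < T ω → 1 ≤ k → -(ξ:ℤ) < X k ω ∧ X k ω < m := by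
    intro ω hex
    obtain ⟨n0, hn0⟩ := hex
    have hne : {n : ℕ | 1 ≤ n ∧ (X n ω ≤ -(ξ:ℤ) ∨ (m:ℤ) ≤ X n ω)}.Nonempty := ⟨n0, hn0⟩
    have hmem := Nat.sInf_mem hne
    rw [← hT ω] at hmem
    refine ⟨hmem.1, hmem.2, fun k hk hk1 => ?_⟩
    rw [hT ω] at hk
    have hnot : k ∉ {n : ℕ | 1 ≤ n ∧ (X n ω ≤ -(ξ:ℤ) ∨ (m:ℤ) ≤ X n ω)} :=
      Nat.notMem_of_lt_sInf hk
    simp only [Set.mem_setOf_eq, not_and, not_or, not_le] at hnot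
    exact hnot hk1
  -- T ≤ members
  have hTle : ∀ ω k, 1 ≤ k → (X k ω ≤ -(ξ:ℤ) ∨ (m:ℤ) ≤ X k ω) → T ω ≤ k := by
    intro ω k hk1 hk2
    rw [hT ω]
    exact Nat.sInf_le ⟨hk1, hk2⟩
  -- bound on stopped values
  set B : ℤ := (ξ:ℤ) + m + l with hB
  have hXb : ∀ ω, (∀ k, |step k ω| ≤ (l:ℤ)) →
      (∃ n, n ≥ 1 ∧ (X n ω ≤ -(ξ:ℤ) ∨ (m:ℤ) ≤ X n ω)) →
      ∀ n, |X (min (T ω) n) ω| ≤ B := by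
    intro ω hbd hex n
    obtain ⟨hT1, hTEv, hTmin⟩ := hTfacts ω hex
    rcases Nat.eq_zero_or_pos (min (T ω) n) with hj0 | hj1
    · rw [hj0, hX0]
      simp only [abs_zero, hB]; positivity
    · have hjT : min (T ω) n ≤ T ω := min_le_left _ _
      rcases eq_or_lt_of_le hjT with hjeq | hjlt
      · -- stopped at T ω
        obtain ⟨j', hj'⟩ : ∃ j', min (T ω) n = j' + 1 := ⟨min (T ω) n - 1, by omega⟩
        rw [hj']
        have hXj : X (j' + 1) ω = X j' ω + step j' ω := hXsucc j' ω
        have hs := hbd j'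
        have hprev : -(ξ:ℤ) ≤ X j' ω ∧ X j' ω ≤ m := by
          rcases Nat.eq_zero_or_pos j' with h0 | h1
          · rw [h0, hX0]; constructor <;> omega
          · have := hTmin j' (by omega) h1
            constructor <;> omega
        rw [hXj]
        rw [abs_le] at hs ⊢
        omega
      · -- strictly before T ω
        have := hTmin (min (T ω) n) hjlt hj1
        rw [abs_le]
        omega
  set C : ℝ := ∑ z ∈ Finset.Icc (-B) B, |g z| with hC
  have hCb : ∀ z : ℤ, |z| ≤ B → |g z| ≤ C := by
    intro z hz
    refine Finset.single_le_sum (f := fun z => |g z|) (fun i _ => abs_nonneg _) ?_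
    rw [Finset.mem_Icc, ← abs_le]; exact hz
  -- measurability of T
  have hTmeas : Measurable T := by
    apply measurable_to_countable'
    intro j
    show MeasurableSet {ω | T ω = j}
    rcases Nat.eq_zero_or_pos j with rfl | hj
    · have hs : {ω | T ω = 0} = ⋂ (n : ℕ), ⋂ (_ : 1 ≤ n),
          {ω | ¬(X n ω ≤ -(ξ:ℤ) ∨ (m:ℤ) ≤ X n ω)} := by
        ext ω
        simp only [Set.mem_setOf_eq, Set.mem_iInter, hT ω]
        rw [Nat.sInf_eq_zero]
        constructor
        · rintro (⟨h0, _⟩ | hempty)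
          · omega
          · intro n hn hEvn
            exact Set.eq_empty_iff_forall_notMem.mp hempty n ⟨hn, hEvn⟩
        · intro h
          right
          rw [Set.eq_empty_iff_forall_notMem]
          rintro n ⟨hn1, hn2⟩
          exact h n hn1 hn2
      rw [hs]
      exact MeasurableSet.iInter fun n => MeasurableSet.iInter fun _ =>
        (hXmeas n) (MeasurableSet.of_discrete (s := {x : ℤ | ¬(x ≤ -(ξ:ℤ) ∨ (m:ℤ) ≤ x)}))
    · have hs : {ω | T ω = j} = {ω | 1 ≤ j ∧ (X j ω ≤ -(ξ:ℤ) ∨ (m:ℤ) ≤ X j ω)} ∩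
          ⋂ (k : ℕ), ⋂ (_ : k < j), {ω | ¬(1 ≤ k ∧ (X k ω ≤ -(ξ:ℤ) ∨ (m:ℤ) ≤ X k ω))} := by
        ext ω
        simp only [Set.mem_setOf_eq, Set.mem_inter_iff, Set.mem_iInter, hT ω]
        constructor
        · intro h
          have hne : {n : ℕ | 1 ≤ n ∧ (X n ω ≤ -(ξ:ℤ) ∨ (m:ℤ) ≤ X n ω)}.Nonempty := by
            by_contra hemp
            rw [Set.not_nonempty_iff_eq_empty] at hemp
            rw [hemp, Nat.sInf_empty] at h
            omega
          have hmem := Nat.sInf_mem hne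
          rw [h] at hmem
          refine ⟨hmem, fun k hk => ?_⟩
          rw [← h] at hk
          exact Nat.notMem_of_lt_sInf hk
        · rintro ⟨hmem, hmin⟩
          refine le_antisymm (Nat.sInf_le hmem) ?_
          by_contra hlt
          push_neg at hlt
          have hm2 := Nat.sInf_mem (⟨j, hmem⟩ : {n : ℕ | 1 ≤ n ∧ (X n ω ≤ -(ξ:ℤ) ∨ (m:ℤ) ≤ X n ω)}.Nonempty)
          exact hmin _ hlt hm2
      rw [hs]
      refine MeasurableSet.inter ?_ ?_
      · rw [Set.setOf_and]
        exact (MeasurableSet.const _).inter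
          ((hXmeas j) (MeasurableSet.of_discrete (s := {x : ℤ | x ≤ -(ξ:ℤ) ∨ (m:ℤ) ≤ x})))
      · refine MeasurableSet.iInter fun k => MeasurableSet.iInter fun _ => ?_
        have : {ω | ¬(1 ≤ k ∧ (X k ω ≤ -(ξ:ℤ) ∨ (m:ℤ) ≤ X k ω))}
            = ({ω | 1 ≤ k} ∩ {ω | (X k ω ≤ -(ξ:ℤ) ∨ (m:ℤ) ≤ X k ω)})ᶜ := by
          ext ω; simp [Set.mem_setOf_eq]
        rw [this]
        exact ((MeasurableSet.const _).inter
          ((hXmeas k) (MeasurableSet.of_discrete (s := {x : ℤ | x ≤ -(ξ:ℤ) ∨ (m:ℤ) ≤ x})))).compl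
  have hminmeas : ∀ n : ℕ, Measurable (fun ω => min (T ω) n) := by
    intro n
    exact Measurable.comp (measurable_from_top (f := fun t : ℕ => min t n)) hTmeas
  -- measurability of stopped process
  have hYin : ∀ n : ℕ, Measurable (fun ω => X (min (T ω) n) ω) := by
    intro n
    apply measurable_to_countable'
    intro z
    show MeasurableSet {ω | X (min (T ω) n) ω = z}
    have hs : {ω | X (min (T ω) n) ω = z} = ⋃ k, ({ω | min (T ω) n = k} ∩ {ω | X k ω = z}) := by
      ext ω
      simp only [Set.mem_setOf_eq, Set.mem_iUnion, Set.mem_inter_iff]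
      constructor
      · intro h; exact ⟨min (T ω) n, rfl, h⟩
      · rintro ⟨k, hk, hz⟩; rw [← hk] at hz; exact hz
    rw [hs]
    exact MeasurableSet.iUnion fun k =>
      ((hminmeas n) (measurableSet_singleton k)).inter ((hXmeas k) (measurableSet_singleton z))
  have hTXmeas : Measurable (fun ω => X (T ω) ω) := by
    apply measurable_to_countable'
    intro z
    show MeasurableSet {ω | X (T ω) ω = z}
    have hs : {ω | X (T ω) ω = z} = ⋃ k, ({ω | T ω = k} ∩ {ω | X k ω = z}) := by
      ext ω
      simp only [Set.mem_setOf_eq, Set.mem_iUnion, Set.mem_inter_iff]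
      constructor
      · intro h; exact ⟨T ω, rfl, h⟩
      · rintro ⟨k, hk, hz⟩; rw [← hk] at hz; exact hz
    rw [hs]
    exact MeasurableSet.iUnion fun k =>
      (hTmeas (measurableSet_singleton k)).inter ((hXmeas k) (measurableSet_singleton z))
  set Y : ℕ → Ω → ℝ := fun n ω => g (X (min (T ω) n) ω) with hY
  have hYmeas : ∀ n, Measurable (Y n) := by
    intro n
    rw [hY]
    exact (measurable_from_top (f := g)).comp (hYin n)
  have hGmeas : Measurable (fun ω => g (X (T ω) ω)) :=
    (measurable_from_top (f := g)).comp hTXmeas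
  have hYbd : ∀ n, ∀ᵐ ω ∂μ, |Y n ω| ≤ C := by
    intro n
    filter_upwards [hgood, hae_exit] with ω hbd hex
    simp only [hY]
    exact hCb _ (hXb ω hbd hex n)
  have hYint : ∀ n, Integrable (Y n) μ := by
    intro n
    refine (integrable_const C).mono' (hYmeas n).aestronglyMeasurable ?_
    filter_upwards [hYbd n] with ω hω
    rwa [Real.norm_eq_abs]
  -- a.e. convergence
  have htendae : ∀ᵐ ω ∂μ, Filter.Tendsto (fun n => Y n ω) Filter.atTop (nhds (g (X (T ω) ω))) := by
    filter_upwards [hae_exit] with ω _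
    apply tendsto_atTop_of_eventually_const (i₀ := T ω)
    intro n hn
    simp only [hY, min_eq_left hn]
  have hlim : Filter.Tendsto (fun n => ∫ ω, Y n ω ∂μ) Filter.atTop
      (nhds (∫ ω, g (X (T ω) ω) ∂μ)) := by
    refine tendsto_integral_of_dominated_convergence (fun _ => C)
      (fun n => (hYmeas n).aestronglyMeasurable) (integrable_const C) ?_ htendae
    intro n
    filter_upwards [hYbd n] with ω hω
    rwa [Real.norm_eq_abs]
  -- monotonicity
  have hmono : ∀ n : ℕ, ∫ ω, Y n ω ∂μ ≤ ∫ ω, Y (n+1) ω ∂μ := by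
    intro n
    set B1 : Set Ω := {ω | ∀ k, 1 ≤ k → k ≤ n → ¬(X k ω ≤ -(ξ:ℤ) ∨ (m:ℤ) ≤ X k ω)} with hB1
    have hB1meas : MeasurableSet B1 := by
      have hs : B1 = ⋂ (k : ℕ), ⋂ (_ : 1 ≤ k), ⋂ (_ : k ≤ n),
          {ω | ¬(X k ω ≤ -(ξ:ℤ) ∨ (m:ℤ) ≤ X k ω)} := by
        ext ω
        simp only [hB1, Set.mem_setOf_eq, Set.mem_iInter]
      rw [hs]
      exact MeasurableSet.iInter fun k => MeasurableSet.iInter fun _ =>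
        MeasurableSet.iInter fun _ =>
          (hXmeas k) (MeasurableSet.of_discrete (s := {x : ℤ | ¬(x ≤ -(ξ:ℤ) ∨ (m:ℤ) ≤ x)}))
    set A : ℤ → Set Ω := fun x => B1 ∩ {ω | X n ω = x} with hA
    have hAmeas : ∀ x, MeasurableSet (A x) := fun x =>
      hB1meas.inter ((hXmeas n) (measurableSet_singleton x))
    have hABmeas : ∀ x i, MeasurableSet (A x ∩ {ω | step n ω = i}) := fun x i =>
      (hAmeas x).inter ((hmeas n) (measurableSet_singleton i))
    -- independence factorization
    have hfact : ∀ x i, μ (A x ∩ {ω | step n ω = i}) = μ (A x) * ENNReal.ofReal (p i) := by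
      intro x i
      have hdisj : Disjoint (Finset.range n) ({n} : Finset ℕ) := by simp
      have hind := hindep.indepFun_finset (Finset.range n) {n} hdisj hmeas
      set PS : ({ x // x ∈ Finset.range n } → ℤ) → ℕ → ℤ :=
        fun v k => ∑ j ∈ Finset.range k, (if h : j < n then v ⟨j, Finset.mem_range.mpr h⟩ else 0)
        with hPS
      have hPSX : ∀ (ω : Ω) (k : ℕ), k ≤ n →
          PS (fun q : { x // x ∈ Finset.range n } => step (q : ℕ) ω) k = X k ω := by
        intro ω k hk
        rw [hX, hPS]
        refine Finset.sum_congr rfl fun j hj => ?_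
        rw [Finset.mem_range] at hj
        rw [dif_pos (lt_of_lt_of_le hj hk)]
      set tset : Set ({ x // x ∈ Finset.range n } → ℤ) :=
        {v | (∀ k, 1 ≤ k → k ≤ n → ¬(PS v k ≤ -(ξ:ℤ) ∨ (m:ℤ) ≤ PS v k)) ∧ PS v n = x} with htset
      set uset : Set ({ x // x ∈ ({n} : Finset ℕ) } → ℤ) :=
        {v | v ⟨n, Finset.mem_singleton_self n⟩ = i} with huset
      have hApre : A x = (fun a (q : { x // x ∈ Finset.range n }) => step (q : ℕ) a) ⁻¹' tset := by
        ext ω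
        simp only [hA, hB1, Set.mem_inter_iff, Set.mem_setOf_eq, Set.mem_preimage, htset]
        constructor
        · rintro ⟨h1, h2⟩
          constructor
          · intro k hk1 hk2
            rw [hPSX ω k hk2]
            exact h1 k hk1 hk2
          · rw [hPSX ω n le_rfl]
            exact h2
        · rintro ⟨h1, h2⟩
          constructor
          · intro k hk1 hk2
            have := h1 k hk1 hk2
            rwa [hPSX ω k hk2] at this
          · rwa [hPSX ω n le_rfl] at h2
      have hBpre : {ω | step n ω = i}
          = (fun a (q : { x // x ∈ ({n} : Finset ℕ) }) => step (q : ℕ) a) ⁻¹' uset := by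
        ext ω
        simp only [Set.mem_setOf_eq, Set.mem_preimage, huset]
      rw [hApre, hBpre]
      rw [hind.measure_inter_preimage_eq_mul tset uset MeasurableSet.of_discrete
        MeasurableSet.of_discrete]
      congr 1
      rw [← hBpre]
      exact hlaw n i
    -- the increment function
    set M : ℤ := (n : ℤ) * l with hM
    set D : Ω → ℝ := fun ω => ∑ x ∈ Finset.Icc (-M) M, ∑ i ∈ Finset.Icc (-(l:ℤ)) l,
        Set.indicator (A x ∩ {ω' | step n ω' = i}) (fun _ => g (x + i) - g x) ω with hD
    have hae_diff : (fun ω => Y (n+1) ω - Y n ω) =ᵐ[μ] D := by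
      filter_upwards [hgood, hae_exit] with ω hbd hex
      obtain ⟨hT1, hTEv, hTmin⟩ := hTfacts ω hex
      by_cases hωB : ∀ k, 1 ≤ k → k ≤ n → ¬(X k ω ≤ -(ξ:ℤ) ∨ (m:ℤ) ≤ X k ω)
      · -- no exit up to time n : T ω > n
        have hTgt : n < T ω := by
          by_contra hle
          push_neg at hle
          exact hωB (T ω) hT1 hle hTEv
        have hmin1 : min (T ω) n = n := min_eq_right (le_of_lt hTgt)
        have hmin2 : min (T ω) (n+1) = n + 1 := min_eq_right (by omega)
        have hXnb : |X n ω| ≤ M := by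
          rw [hX, hM]
          calc |∑ k ∈ Finset.range n, step k ω| ≤ ∑ k ∈ Finset.range n, |step k ω| :=
                Finset.abs_sum_le_sum_abs _ _
          _ ≤ ∑ _k ∈ Finset.range n, (l:ℤ) := Finset.sum_le_sum fun k _ => hbd k
          _ = (n:ℤ) * l := by rw [Finset.sum_const, Finset.card_range, nsmul_eq_mul]
        have hωB1 : ω ∈ B1 := by rw [hB1]; exact hωB
        have hωA : ω ∈ A (X n ω) := by simp only [hA]; exact ⟨hωB1, rfl⟩
        have hstepb := hbd n
        simp only [hY, hmin1, hmin2, hD]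
        rw [Finset.sum_eq_single (X n ω)]
        · rw [Finset.sum_eq_single (step n ω)]
          · have hmem : ω ∈ A (X n ω) ∩ {ω' | step n ω' = step n ω} :=
              Set.mem_inter hωA rfl
            rw [Set.indicator_of_mem hmem, hXsucc n ω]
          · intro b _ hb
            refine Set.indicator_of_notMem ?_ _
            rw [Set.mem_inter_iff]
            rintro ⟨-, hmem2⟩
            exact hb (Eq.symm hmem2)
          · intro hnotmem
            exfalso
            apply hnotmem
            rw [Finset.mem_Icc, ← abs_le]
            exact hstepb
        · intro b _ hb
          refine Finset.sum_eq_zero fun i _ => ?_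
          refine Set.indicator_of_notMem ?_ _
          simp only [hA, Set.mem_inter_iff, Set.mem_setOf_eq]
          rintro ⟨⟨-, hmem2⟩, -⟩
          exact hb (Eq.symm hmem2)
        · intro hnotmem
          exfalso
          apply hnotmem
          rw [Finset.mem_Icc, ← abs_le]
          exact hXnb
      · -- exit at or before time n : T ω ≤ n
        push_neg at hωB
        obtain ⟨k, hk1, hk2, hk3⟩ := hωB
        have hTn : T ω ≤ n := le_trans (hTle ω k hk1 (by tauto)) hk2
        have hmin1 : min (T ω) n = T ω := min_eq_left hTn
        have hmin2 : min (T ω) (n+1) = T ω := min_eq_left (by omega)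
        have hzero : D ω = 0 := by
          rw [hD]
          refine Finset.sum_eq_zero fun x _ => Finset.sum_eq_zero fun i _ => ?_
          refine Set.indicator_of_notMem ?_ _
          simp only [hA, hB1, Set.mem_inter_iff, Set.mem_setOf_eq]
          rintro ⟨⟨hB1mem, -⟩, -⟩
          exact hB1mem k hk1 hk2 (by tauto)
        simp only [hY, hmin1, hmin2, hzero, sub_self]
    have hDint : Integrable D μ := by
      rw [hD]
      refine integrable_finset_sum _ fun x _ => integrable_finset_sum _ fun i _ => ?_
      exact (integrable_const _).indicator (hABmeas x i)
    have hDnonneg : 0 ≤ ∫ ω, D ω ∂μ := by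
      rw [hD]
      rw [integral_finset_sum _ fun x _ => integrable_finset_sum _ fun i _ =>
        (integrable_const _).indicator (hABmeas x i)]
      refine Finset.sum_nonneg fun x _ => ?_
      rw [integral_finset_sum _ fun i _ => (integrable_const _).indicator (hABmeas x i)]
      have hterm : ∀ i ∈ Finset.Icc (-(l:ℤ)) l,
          (∫ ω, Set.indicator (A x ∩ {ω' | step n ω' = i}) (fun _ => g (x + i) - g x) ω ∂μ)
          = (μ (A x)).toReal * (p i * (g (x + i) - g x)) := by
        intro i _
        rw [integral_indicator_const (g (x + i) - g x) (hABmeas x i), measureReal_def, hfact x i, smul_eq_mul,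
          ENNReal.toReal_mul, ENNReal.toReal_ofReal (hp_nonneg i)]
        ring
      rw [Finset.sum_congr rfl hterm, ← Finset.mul_sum]
      exact mul_nonneg ENNReal.toReal_nonneg (hkey x)
    have hsub : ∫ ω, Y (n+1) ω ∂μ - ∫ ω, Y n ω ∂μ = ∫ ω, D ω ∂μ := by
      rw [← integral_sub (hYint (n+1)) (hYint n)]
      exact integral_congr_ae hae_diff
    linarith
  -- conclusion
  have hY0 : ∫ ω, Y 0 ω ∂μ = 0 := by
    have : Y 0 = fun _ => (0:ℝ) := by
      funext ω
      simp only [hY, Nat.min_zero, hX0, hg_zero]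
    rw [this, integral_zero]
  have hge : ∀ n, 0 ≤ ∫ ω, Y n ω ∂μ := by
    intro n
    induction n with
    | zero => rw [hY0]
    | succ k ih => exact le_trans ih (hmono k)
  exact ge_of_tendsto hlim (Filter.Eventually.of_forall hge)
end

section
/- Let H ∈ Matrix (Fin d) (Fin d) ℂ be Hermitian. Then for every matrix A ∈ Matrix (Fin d) (Fin d) ℂ, the Cesàro time average of the Heisenberg evolution of A converges to the pinching of A: the map T ↦ (1/T) ∫_0^T exp(−itH) · A · exp(itH) dt tends, as T → ∞, to 𝒫(A) = ∑_E Π_E A Π_E, where the sum runs over the distinct eigenvalues E of H. (Here exp denotes the matrix exponential.) -/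
open MeasureTheory Filter Matrix

attribute [local instance] Matrix.frobeniusNormedAddCommGroup Matrix.frobeniusNormedSpace

attribute [local instance] Matrix.frobeniusNormedRing Matrix.frobeniusNormedAlgebra

lemma cexp_tail (z : ℂ) : ∑' n : ℕ, (((n+1).factorial : ℂ))⁻¹ * z ^ (n+1) = Complex.exp z - 1 := by
  have h : Complex.exp z = ∑' n : ℕ, ((n.factorial : ℂ))⁻¹ • z ^ n := by
    simp [Complex.exp_eq_exp_ℂ, NormedSpace.exp_eq_tsum (𝕂 := ℂ)]
  rw [Summable.tsum_eq_zero_add (NormedSpace.expSeries_summable' (𝕂 := ℂ) z)] at h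
  simp only [pow_zero, Nat.factorial_zero, Nat.cast_one, inv_one, smul_eq_mul, mul_one] at h
  rw [h, add_sub_cancel_left]

lemma cexp_tail_summable (z : ℂ) : Summable fun n : ℕ => (((n+1).factorial : ℂ))⁻¹ * z ^ (n+1) := by
  have := (NormedSpace.expSeries_summable' (𝕂 := ℂ) z).comp_injective
    (add_left_injective 1)
  simpa [smul_eq_mul, Function.comp_def] using this

set_option maxHeartbeats 1000000 in
lemma aux_exp_spec (d : ℕ) (Spec : Finset ℝ) (P : ℝ → Matrix (Fin d) (Fin d) ℂ)
    (hP_orth : ∀ E ∈ Spec, ∀ F ∈ Spec, P E * P F = if E = F then P E else 0)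
    (hP_sum : ∑ E ∈ Spec, P E = 1) (c : ℂ) :
    NormedSpace.exp (∑ E ∈ Spec, (c * E) • P E) =
      ∑ E ∈ Spec, Complex.exp (c * E) • P E := by
  set M := ∑ E ∈ Spec, (c * E) • P E with hM
  have hpow : ∀ n : ℕ, M ^ (n+1) = ∑ E ∈ Spec, (c * E)^(n+1) • P E := by
    intro n
    induction n with
    | zero => simp [hM]
    | succ n ih =>
      rw [pow_succ, ih, hM, Finset.sum_mul_sum]
      refine Finset.sum_congr rfl fun E hE => ?_
      rw [Finset.sum_eq_single E]
      · rw [smul_mul_assoc, mul_smul_comm, hP_orth E hE E hE, if_pos rfl, smul_smul]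
        ring_nf
      · intro F hF hFE
        rw [smul_mul_assoc, mul_smul_comm, hP_orth E hE F hF, if_neg (fun h => hFE h.symm)]
        simp
      · intro h; exact absurd hE h
  simp only [NormedSpace.exp_eq_tsum (𝕂 := ℂ)]
  rw [Summable.tsum_eq_zero_add (by exact NormedSpace.expSeries_summable' (𝕂 := ℂ) M)]
  simp only [pow_zero, Nat.factorial_zero, Nat.cast_one, inv_one, one_smul]
  have hterm : ∀ n : ℕ, (((n+1).factorial : ℂ))⁻¹ • M ^ (n+1)
      = ∑ E ∈ Spec, ((((n+1).factorial : ℂ))⁻¹ * (c * E)^(n+1)) • P E := by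
    intro n
    rw [hpow n, Finset.smul_sum]
    exact Finset.sum_congr rfl fun E _ => (smul_smul _ _ _)
  calc (1 : Matrix (Fin d) (Fin d) ℂ) + ∑' n : ℕ, (((n+1).factorial : ℂ))⁻¹ • M ^ (n+1)
      = 1 + ∑ E ∈ Spec, (Complex.exp (c * E) - 1) • P E := by
        congr 1
        rw [tsum_congr hterm, Summable.tsum_finsetSum fun (E : ℝ) _ => (cexp_tail_summable (c * E)).smul_const (P E)]
        exact Finset.sum_congr rfl fun E _ => by
          rw [Summable.tsum_smul_const (cexp_tail_summable (c * E)), cexp_tail]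
    _ = ∑ E ∈ Spec, Complex.exp (c * E) • P E := by
        rw [← hP_sum]
        rw [← Finset.sum_add_distrib]
        refine Finset.sum_congr rfl fun E _ => ?_
        rw [sub_smul, one_smul]
        abel

/-- **The pinching channel as a Cesàro time average (Eq. (13) of the paper).**
Let `H` be a Hermitian matrix with spectral decomposition `H = ∑_{E ∈ Spec} E • P E`, where
the `P E` are the (nonzero, pairwise orthogonal, complete) eigenprojections onto the
eigenspaces of the distinct eigenvalues `E`.  Then for every matrix `A`, the Cesàro time
average `T ↦ (1/T) ∫_0^T exp(−itH) A exp(itH) dt` of the Heisenberg evolution of `A`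
converges, as `T → ∞`, to the pinching `𝒫(A) = ∑_{E ∈ Spec} P E * A * P E`. -/
theorem pinching_as_cesaro_time_average
    (d : ℕ) (hd : 0 < d)
    (H : Matrix (Fin d) (Fin d) ℂ) (hH : H.IsHermitian)
    (Spec : Finset ℝ) (P : ℝ → Matrix (Fin d) (Fin d) ℂ)
    (hP_herm : ∀ E ∈ Spec, (P E).IsHermitian)
    (hP_orth : ∀ E ∈ Spec, ∀ F ∈ Spec, P E * P F = if E = F then P E else 0)
    (hP_sum : ∑ E ∈ Spec, P E = 1)
    (hP_ne : ∀ E ∈ Spec, P E ≠ 0)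
    (hspec : H = ∑ E ∈ Spec, (E : ℂ) • P E)
    (A : Matrix (Fin d) (Fin d) ℂ) :
    Tendsto
      (fun T : ℝ => (1 / T) • ∫ t in (0:ℝ)..T,
        NormedSpace.exp ((-(t : ℂ) * Complex.I) • H) * A *
          NormedSpace.exp (((t : ℂ) * Complex.I) • H))
      atTop (nhds (∑ E ∈ Spec, P E * A * P E)) := by
  classical
  have key : ∀ t : ℝ,
      NormedSpace.exp ((-(t : ℂ) * Complex.I) • H) * A *
        NormedSpace.exp (((t : ℂ) * Complex.I) • H)
      = ∑ E ∈ Spec, ∑ F ∈ Spec,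
          Complex.exp (Complex.I * ((F : ℂ) - (E : ℂ)) * t) • (P E * A * P F) := by
    intro t
    have e1 : (-(t:ℂ) * Complex.I) • H = ∑ E ∈ Spec, ((-(t:ℂ) * Complex.I) * E) • P E := by
      rw [hspec, Finset.smul_sum]
      exact Finset.sum_congr rfl fun E _ => (smul_smul _ _ _)
    have e2 : ((t:ℂ) * Complex.I) • H = ∑ E ∈ Spec, (((t:ℂ) * Complex.I) * E) • P E := by
      rw [hspec, Finset.smul_sum]
      exact Finset.sum_congr rfl fun E _ => (smul_smul _ _ _)
    rw [e1, e2, aux_exp_spec d Spec P hP_orth hP_sum, aux_exp_spec d Spec P hP_orth hP_sum]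
    rw [Finset.sum_mul, Finset.sum_mul]
    refine Finset.sum_congr rfl fun E hE => ?_
    rw [Finset.mul_sum]
    refine Finset.sum_congr rfl fun F hF => ?_
    rw [smul_mul_assoc, smul_mul_assoc, mul_smul_comm, smul_smul, ← Complex.exp_add]
    congr 2
    ring
  have hcont : ∀ (z : ℂ), Continuous fun t : ℝ => Complex.exp (z * t) :=
    fun z => Complex.continuous_exp.comp (continuous_const.mul Complex.continuous_ofReal)
  have hfun : ∀ T : ℝ,
      (1 / T) • (∫ t in (0:ℝ)..T,
        NormedSpace.exp ((-(t : ℂ) * Complex.I) • H) * A *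
          NormedSpace.exp (((t : ℂ) * Complex.I) • H))
      = ∑ E ∈ Spec, ∑ F ∈ Spec,
          (((1:ℂ)/(T:ℂ)) * ∫ t in (0:ℝ)..T,
            Complex.exp (Complex.I * ((F : ℂ) - (E : ℂ)) * t)) • (P E * A * P F) := by
    intro T
    rw [intervalIntegral.integral_congr (g := fun t : ℝ => ∑ E ∈ Spec, ∑ F ∈ Spec,
          Complex.exp (Complex.I * ((F : ℂ) - (E : ℂ)) * t) • (P E * A * P F))
        (fun t _ => key t)]
    rw [intervalIntegral.integral_finset_sum (f := fun (E : ℝ) (t : ℝ) => ∑ F ∈ Spec,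
        Complex.exp (Complex.I * ((F : ℂ) - (E : ℂ)) * t) • (P E * A * P F)) (fun E _ =>
      (continuous_finset_sum _ fun F _ => ((hcont _).smul continuous_const)).intervalIntegrable _ _)]
    rw [Finset.smul_sum]
    refine Finset.sum_congr rfl fun E hE => ?_
    rw [intervalIntegral.integral_finset_sum (f := fun (F : ℝ) (t : ℝ) =>
        Complex.exp (Complex.I * ((F : ℂ) - (E : ℂ)) * t) • (P E * A * P F)) (fun F _ =>
      ((hcont _).smul continuous_const).intervalIntegrable _ _)]
    rw [Finset.smul_sum]
    refine Finset.sum_congr rfl fun F hF => ?_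
    rw [intervalIntegral.integral_smul_const, ← smul_assoc]
    congr 1
    rw [Complex.real_smul]
    push_cast
    ring
  rw [funext hfun]
  have hlim : ∑ E ∈ Spec, P E * A * P E
      = ∑ E ∈ Spec, ∑ F ∈ Spec, (if E = F then (1:ℂ) else 0) • (P E * A * P F) := by
    refine Finset.sum_congr rfl fun E hE => ?_
    simp [ite_smul, Finset.sum_ite_eq, hE]
  rw [hlim]
  refine tendsto_finset_sum _ fun E hE => tendsto_finset_sum _ fun F hF => ?_
  by_cases h : E = F
  · subst h
    have hscalar : Tendsto (fun T : ℝ => ((1:ℂ)/(T:ℂ)) *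
        ∫ t in (0:ℝ)..T, Complex.exp (Complex.I * ((E : ℂ) - (E : ℂ)) * t)) atTop
        (nhds 1) := by
      refine Tendsto.congr' ?_ tendsto_const_nhds
      filter_upwards [eventually_gt_atTop (0:ℝ)] with T hT
      symm
      rw [intervalIntegral.integral_congr (g := fun _ : ℝ => (1:ℂ))
          (fun t _ => by simp)]
      rw [intervalIntegral.integral_const]
      rw [sub_zero, Complex.real_smul, mul_one, one_div, inv_mul_cancel₀
        (Complex.ofReal_ne_zero.2 hT.ne')]
    simpa using hscalar.smul_const (P E * A * P E)
  · simp only [if_neg h]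
    have hsub : ((F : ℂ) - (E : ℂ)) ≠ 0 := by
      rw [sub_ne_zero]
      exact_mod_cast fun hEq => h (by exact_mod_cast hEq.symm)
    set z : ℂ := Complex.I * ((F : ℂ) - (E : ℂ)) with hz
    have hzne : z ≠ 0 := mul_ne_zero Complex.I_ne_zero hsub
    have hscalar : Tendsto (fun T : ℝ => ((1:ℂ)/(T:ℂ)) *
        ∫ t in (0:ℝ)..T, Complex.exp (z * t)) atTop (nhds 0) := by
      refine squeeze_zero_norm' (a := fun T : ℝ => (2/‖z‖) * (1/T)) ?_ ?_
      · filter_upwards [eventually_gt_atTop (0:ℝ)] with T hT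
        rw [integral_exp_mul_complex hzne]
        rw [norm_mul, norm_div]
        have hre : (z * (T:ℂ)).re = 0 := by
          rw [hz]
          simp [Complex.mul_re, Complex.mul_im]
        have h1 : ‖Complex.exp (z * (T:ℂ)) - Complex.exp (z * (0:ℝ))‖ ≤ 2 := by
          rw [Complex.ofReal_zero, mul_zero, Complex.exp_zero]
          calc ‖Complex.exp (z * (T:ℂ)) - 1‖ ≤ ‖Complex.exp (z * (T:ℂ))‖ + ‖(1:ℂ)‖ :=
              norm_sub_le _ _
            _ ≤ 2 := by
              rw [Complex.norm_exp, hre, Real.exp_zero]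
              norm_num
        have hTn : ‖(1:ℂ)‖ / ‖(T:ℂ)‖ = 1/T := by
          rw [norm_one, Complex.norm_real, Real.norm_eq_abs, abs_of_pos hT]
        rw [hTn, norm_div, mul_comm ((2:ℝ)/‖z‖) (1/T)]
        gcongr
      · simpa using tendsto_inv_atTop_zero.const_mul (2/‖z‖)
    simpa using hscalar.smul_const (P E * A * P F)
end

section
/- Let H ∈ Matrix (Fin d) (Fin d) ℂ be Hermitian, β > 0, and ρ a density matrix. Then: (i) the pinched state 𝒫(ρ) is again a density matrix; (ii) the energy is preserved, Re Tr(𝒫(ρ)·H) = Re Tr(ρ·H); (iii) the von Neumann entropy does not decrease, S(𝒫(ρ)) ≥ S(ρ); and consequently (iv) the nonequilibrium free energy does not increase under pinching, F(𝒫(ρ)) ≤ F(ρ). -/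
open Matrix
open scoped ComplexOrder

/-- The von Neumann entropy `S(ρ) = −∑ᵢ λᵢ log λᵢ` of a Hermitian matrix `ρ`, where the `λᵢ`
are its eigenvalues counted with multiplicity (`0·log 0 = 0` since `Real.log 0 = 0`). -/
noncomputable def vnEntropy {d : ℕ} {ρ : Matrix (Fin d) (Fin d) ℂ}
    (hρ : ρ.IsHermitian) : ℝ :=
  -∑ i, hρ.eigenvalues i * Real.log (hρ.eigenvalues i)

/-- The nonequilibrium free energy `F(ρ) = Re Tr(ρH) − S(ρ)/β` at inverse temperature `β`. -/
noncomputable def freeEnergy {d : ℕ} (β : ℝ) (H : Matrix (Fin d) (Fin d) ℂ)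
    {ρ : Matrix (Fin d) (Fin d) ℂ} (hρ : ρ.IsHermitian) : ℝ :=
  (ρ * H).trace.re - vnEntropy hρ / β

lemma pinching_entropy_aux
    {d : ℕ} (Spec : Finset ℝ) (P : ℝ → Matrix (Fin d) (Fin d) ℂ)
    (hP_herm : ∀ E ∈ Spec, (P E).IsHermitian)
    (hP_orth : ∀ E ∈ Spec, ∀ F ∈ Spec, P E * P F = if E = F then P E else 0)
    (hP_sum : ∑ E ∈ Spec, P E = 1)
    (ρ : Matrix (Fin d) (Fin d) ℂ) (hρ : ρ.PosSemidef)
    (hσ : (∑ E ∈ Spec, P E * ρ * P E).IsHermitian) :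
    vnEntropy hρ.1 ≤ vnEntropy hσ := by
  classical
  set U : Matrix (Fin d) (Fin d) ℂ := (hσ.eigenvectorUnitary : Matrix (Fin d) (Fin d) ℂ) with hUdef
  set V : Matrix (Fin d) (Fin d) ℂ := (hρ.1.eigenvectorUnitary : Matrix (Fin d) (Fin d) ℂ) with hVdef
  have hUs : star U * U = 1 := mem_unitaryGroup_iff'.mp hσ.eigenvectorUnitary.2
  have hUU : U * star U = 1 := mem_unitaryGroup_iff.mp hσ.eigenvectorUnitary.2
  have hVs : star V * V = 1 := mem_unitaryGroup_iff'.mp hρ.1.eigenvectorUnitary.2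
  have hVV : V * star V = 1 := mem_unitaryGroup_iff.mp hρ.1.eigenvectorUnitary.2
  set M : ℝ → Matrix (Fin d) (Fin d) ℂ := fun E => star U * P E * V with hMdef
  set B : Fin d → Fin d → ℝ := fun j i => ∑ E ∈ Spec, Complex.normSq (M E j i) with hBdef
  have hstarP : ∀ E ∈ Spec, star (P E) = P E := fun E hE => (hP_herm E hE).eq
  have hstarM : ∀ E ∈ Spec, star (M E) = star V * P E * U := by
    intro E hE
    simp only [hMdef, Matrix.star_mul, star_star, hstarP E hE, Matrix.mul_assoc]
  have hMMstar : ∀ E ∈ Spec, M E * star (M E) = star U * P E * U := by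
    intro E hE
    rw [hstarM E hE]
    calc (star U * P E * V) * (star V * P E * U)
        = star U * (P E * ((V * star V) * (P E * U))) := by
          simp only [Matrix.mul_assoc]
      _ = star U * (P E * (P E * U)) := by rw [hVV, Matrix.one_mul]
      _ = star U * ((P E * P E) * U) := by rw [Matrix.mul_assoc]
      _ = star U * P E * U := by rw [hP_orth E hE E hE, if_pos rfl, Matrix.mul_assoc]
  have hstarMM : ∀ E ∈ Spec, star (M E) * M E = star V * P E * V := by
    intro E hE
    rw [hstarM E hE]
    calc (star V * P E * U) * (star U * P E * V)
        = star V * (P E * ((U * star U) * (P E * V))) := by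
          simp only [Matrix.mul_assoc]
      _ = star V * (P E * (P E * V)) := by rw [hUU, Matrix.one_mul]
      _ = star V * ((P E * P E) * V) := by rw [Matrix.mul_assoc]
      _ = star V * P E * V := by rw [hP_orth E hE E hE, if_pos rfl, Matrix.mul_assoc]
  have hsumUPU : ∑ E ∈ Spec, star U * P E * U = 1 := by
    rw [← Finset.sum_mul, ← Finset.mul_sum, hP_sum, Matrix.mul_one, hUs]
  have hsumVPV : ∑ E ∈ Spec, star V * P E * V = 1 := by
    rw [← Finset.sum_mul, ← Finset.mul_sum, hP_sum, Matrix.mul_one, hVs]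
  have hrowC : ∀ j, ∀ E ∈ Spec, ∑ i, (Complex.normSq (M E j i) : ℂ) = (star U * P E * U) j j := by
    intro j E hE
    rw [← hMMstar E hE, Matrix.mul_apply]
    refine Finset.sum_congr rfl fun i _ => ?_
    rw [Matrix.star_apply, Complex.star_def, Complex.mul_conj]
  have hcolC : ∀ i, ∀ E ∈ Spec, ∑ j, (Complex.normSq (M E j i) : ℂ) = (star V * P E * V) i i := by
    intro i E hE
    rw [← hstarMM E hE, Matrix.mul_apply]
    refine Finset.sum_congr rfl fun j _ => ?_
    rw [Matrix.star_apply, Complex.star_def]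
    rw [show (starRingEnd ℂ) (M E j i) * M E j i = M E j i * (starRingEnd ℂ) (M E j i) from mul_comm _ _,
      Complex.mul_conj]
  have hrow : ∀ j, ∑ i, B j i = 1 := by
    intro j
    have hC : ((∑ i, B j i : ℝ) : ℂ) = 1 := by
      push_cast [hBdef]
      rw [Finset.sum_comm]
      calc ∑ E ∈ Spec, ∑ i, (Complex.normSq (M E j i) : ℂ)
          = ∑ E ∈ Spec, (star U * P E * U) j j :=
            Finset.sum_congr rfl fun E hE => hrowC j E hE
        _ = (∑ E ∈ Spec, star U * P E * U) j j := by rw [Matrix.sum_apply]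
        _ = (1 : Matrix (Fin d) (Fin d) ℂ) j j := by rw [hsumUPU]
        _ = 1 := Matrix.one_apply_eq j
    exact_mod_cast hC
  have hcol : ∀ i, ∑ j, B j i = 1 := by
    intro i
    have hC : ((∑ j, B j i : ℝ) : ℂ) = 1 := by
      push_cast [hBdef]
      rw [Finset.sum_comm]
      calc ∑ E ∈ Spec, ∑ j, (Complex.normSq (M E j i) : ℂ)
          = ∑ E ∈ Spec, (star V * P E * V) i i :=
            Finset.sum_congr rfl fun E hE => hcolC i E hE
        _ = (∑ E ∈ Spec, star V * P E * V) i i := by rw [Matrix.sum_apply]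
        _ = (1 : Matrix (Fin d) (Fin d) ℂ) i i := by rw [hsumVPV]
        _ = 1 := Matrix.one_apply_eq i
    exact_mod_cast hC
  -- eigenvalue mixing identity
  have hdiagRC : diagonal ((RCLike.ofReal ∘ hρ.1.eigenvalues) : Fin d → ℂ)
      = diagonal (Complex.ofReal ∘ hρ.1.eigenvalues) := rfl
  have hform : star U * (∑ E ∈ Spec, P E * ρ * P E) * U
      = ∑ E ∈ Spec, M E * diagonal (Complex.ofReal ∘ hρ.1.eigenvalues) * star (M E) := by
    rw [Finset.mul_sum, Finset.sum_mul]
    refine Finset.sum_congr rfl fun E hE => ?_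
    rw [hstarM E hE]
    conv_lhs => rw [hρ.1.spectral_theorem]
    rw [hdiagRC]
    simp only [hMdef, Matrix.mul_assoc, hVdef, Unitary.conjStarAlgAut_apply]
  have hR : ∀ j, (∑ E ∈ Spec, M E * diagonal (Complex.ofReal ∘ hρ.1.eigenvalues) * star (M E)) j j
      = ∑ E ∈ Spec, ∑ i, (Complex.normSq (M E j i) : ℂ) * (hρ.1.eigenvalues i : ℂ) := by
    intro j
    rw [Matrix.sum_apply]
    refine Finset.sum_congr rfl fun E hE => ?_
    rw [Matrix.mul_apply]
    refine Finset.sum_congr rfl fun i _ => ?_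
    rw [Matrix.mul_diagonal, Matrix.star_apply, show star (M E j i) = (starRingEnd ℂ) (M E j i) from rfl]
    calc M E j i * (Complex.ofReal ∘ hρ.1.eigenvalues) i * (starRingEnd ℂ) (M E j i)
        = M E j i * (starRingEnd ℂ) (M E j i) * (hρ.1.eigenvalues i : ℂ) := by
          simp only [Function.comp_apply]; ring
      _ = (Complex.normSq (M E j i) : ℂ) * (hρ.1.eigenvalues i : ℂ) := by
          rw [Complex.mul_conj]
  have hμ : ∀ j, hσ.eigenvalues j = ∑ i, B j i * hρ.1.eigenvalues i := by
    intro j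
    have hdiag : star U * (∑ E ∈ Spec, P E * ρ * P E) * U
        = diagonal (Complex.ofReal ∘ hσ.eigenvalues) := by
      have h := hσ.conjStarAlgAut_star_eigenvectorUnitary
      rw [Unitary.conjStarAlgAut_star_apply] at h
      exact h
    have hjj := congrFun (congrFun (hdiag.symm.trans hform) j) j
    rw [Matrix.diagonal_apply_eq, hR j] at hjj
    have hjj2 : (hσ.eigenvalues j : ℂ)
        = ∑ E ∈ Spec, ∑ i, (Complex.normSq (M E j i) : ℂ) * (hρ.1.eigenvalues i : ℂ) := hjj
    have hcast : ((∑ i, B j i * hρ.1.eigenvalues i : ℝ) : ℂ)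
        = ∑ E ∈ Spec, ∑ i, (Complex.normSq (M E j i) : ℂ) * (hρ.1.eigenvalues i : ℂ) := by
      push_cast [hBdef]
      simp only [Finset.sum_mul]
      rw [Finset.sum_comm]
    exact_mod_cast hjj2.trans hcast.symm
  -- Jensen
  have hlam : ∀ i, 0 ≤ hρ.1.eigenvalues i := fun i => hρ.eigenvalues_nonneg i
  have hBnn : ∀ j i, 0 ≤ B j i := fun j i =>
    Finset.sum_nonneg fun E _ => Complex.normSq_nonneg _
  have key : ∀ j, hσ.eigenvalues j * Real.log (hσ.eigenvalues j)
      ≤ ∑ i, B j i * (hρ.1.eigenvalues i * Real.log (hρ.1.eigenvalues i)) := by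
    intro j
    have := Real.convexOn_mul_log.map_sum_le (t := Finset.univ) (w := B j)
      (p := hρ.1.eigenvalues) (fun i _ => hBnn j i) (hrow j) (fun i _ => hlam i)
    simpa [smul_eq_mul, ← hμ j] using this
  unfold vnEntropy
  apply neg_le_neg
  calc ∑ j, hσ.eigenvalues j * Real.log (hσ.eigenvalues j)
      ≤ ∑ j, ∑ i, B j i * (hρ.1.eigenvalues i * Real.log (hρ.1.eigenvalues i)) :=
        Finset.sum_le_sum fun j _ => key j
    _ = ∑ i, (∑ j, B j i) * (hρ.1.eigenvalues i * Real.log (hρ.1.eigenvalues i)) := by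
        rw [Finset.sum_comm]
        exact Finset.sum_congr rfl fun i _ => (Finset.sum_mul _ _ _).symm
    _ = ∑ i, hρ.1.eigenvalues i * Real.log (hρ.1.eigenvalues i) := by
        refine Finset.sum_congr rfl fun i _ => ?_
        rw [hcol i, one_mul]

lemma posSemidef_sum_aux {d : ℕ} (S : Finset ℝ) (f : ℝ → Matrix (Fin d) (Fin d) ℂ)
    (h : ∀ E ∈ S, (f E).PosSemidef) : (∑ E ∈ S, f E).PosSemidef := by
  classical
  induction S using Finset.induction with
  | empty => simpa using Matrix.PosSemidef.zero
  | insert a s hnot ih =>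
    rw [Finset.sum_insert hnot]
    exact (h _ (Finset.mem_insert_self _ _)).add (ih fun E hE => h E (Finset.mem_insert_of_mem hE))

/-- **Pinching preserves density matrices and energy, increases entropy, decreases free
energy.**  Let `H = ∑_{E ∈ Spec} E • P E` be the spectral decomposition of the Hermitian
matrix `H` into nonzero, pairwise orthogonal, complete eigenprojections, and let
`𝒫(ρ) = ∑_{E ∈ Spec} P E * ρ * P E` be the associated pinching channel.  Then for any
density matrix `ρ` and `β > 0`: (i) `𝒫(ρ)` is a density matrix; (ii) the energy is
preserved, `Re Tr(𝒫(ρ)H) = Re Tr(ρH)`; (iii) `S(𝒫(ρ)) ≥ S(ρ)`; and (iv) the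
nonequilibrium free energy does not increase, `F(𝒫(ρ)) ≤ F(ρ)`. -/
theorem pinching_density_energy_entropy_freeEnergy
    (d : ℕ) (hd : 0 < d)
    (H : Matrix (Fin d) (Fin d) ℂ) (hH : H.IsHermitian)
    (β : ℝ) (hβ : 0 < β)
    (Spec : Finset ℝ) (P : ℝ → Matrix (Fin d) (Fin d) ℂ)
    (hP_herm : ∀ E ∈ Spec, (P E).IsHermitian)
    (hP_orth : ∀ E ∈ Spec, ∀ F ∈ Spec, P E * P F = if E = F then P E else 0)
    (hP_sum : ∑ E ∈ Spec, P E = 1)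
    (hP_ne : ∀ E ∈ Spec, P E ≠ 0)
    (hspec : H = ∑ E ∈ Spec, (E : ℂ) • P E)
    (ρ : Matrix (Fin d) (Fin d) ℂ)
    (hρ : ρ.PosSemidef) (hρtr : ρ.trace = 1) :
    ∃ hpinch : (∑ E ∈ Spec, P E * ρ * P E).PosSemidef,
      (∑ E ∈ Spec, P E * ρ * P E).trace = 1 ∧
      ((∑ E ∈ Spec, P E * ρ * P E) * H).trace.re = (ρ * H).trace.re ∧
      vnEntropy hρ.1 ≤ vnEntropy hpinch.1 ∧
      freeEnergy β H hpinch.1 ≤ freeEnergy β H hρ.1 := by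
  classical
  have hterm : ∀ E ∈ Spec, (P E * ρ * P E).PosSemidef := by
    intro E hE
    have := hρ.mul_mul_conjTranspose_same (P E)
    rwa [(hP_herm E hE).eq] at this
  have hpinch : (∑ E ∈ Spec, P E * ρ * P E).PosSemidef :=
    posSemidef_sum_aux Spec _ hterm
  have htr_term : ∀ E ∈ Spec, (P E * ρ * P E).trace = (ρ * P E).trace := by
    intro E hE
    rw [Matrix.mul_assoc, Matrix.trace_mul_comm, Matrix.mul_assoc,
      hP_orth E hE E hE, if_pos rfl]
  have hPH : ∀ E ∈ Spec, P E * H = (E : ℂ) • P E := by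
    intro E hE
    rw [hspec, Finset.mul_sum]
    rw [Finset.sum_eq_single_of_mem E hE]
    · rw [Matrix.mul_smul, hP_orth E hE E hE, if_pos rfl]
    · intro F hF hne
      rw [Matrix.mul_smul, hP_orth E hE F hF, if_neg fun h => hne h.symm, smul_zero]
  have henergy : ((∑ E ∈ Spec, P E * ρ * P E) * H).trace = (ρ * H).trace := by
    rw [Finset.sum_mul, Matrix.trace_sum]
    have hterm2 : ∀ E ∈ Spec, (P E * ρ * P E * H).trace = ((E : ℂ) • (ρ * P E)).trace := by
      intro E hE
      rw [Matrix.mul_assoc (P E * ρ) (P E) H, hPH E hE, Matrix.mul_smul,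
        Matrix.trace_smul, Matrix.trace_smul, htr_term E hE]
    calc ∑ E ∈ Spec, (P E * ρ * P E * H).trace
        = ∑ E ∈ Spec, ((E : ℂ) • (ρ * P E)).trace := Finset.sum_congr rfl hterm2
      _ = ∑ E ∈ Spec, (ρ * ((E : ℂ) • P E)).trace := by
          refine Finset.sum_congr rfl fun E _ => ?_
          rw [Matrix.mul_smul]
      _ = (ρ * ∑ E ∈ Spec, (E : ℂ) • P E).trace := by rw [Finset.mul_sum, Matrix.trace_sum]
      _ = (ρ * H).trace := by rw [← hspec]
  have hent : vnEntropy hρ.1 ≤ vnEntropy hpinch.1 :=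
    pinching_entropy_aux Spec P hP_herm hP_orth hP_sum ρ hρ hpinch.1
  refine ⟨hpinch, ?_, ?_, hent, ?_⟩
  · rw [Matrix.trace_sum]
    calc ∑ E ∈ Spec, (P E * ρ * P E).trace
        = ∑ E ∈ Spec, (ρ * P E).trace := Finset.sum_congr rfl htr_term
      _ = (ρ * ∑ E ∈ Spec, P E).trace := by rw [Finset.mul_sum, Matrix.trace_sum]
      _ = 1 := by rw [hP_sum, Matrix.mul_one, hρtr]
  · exact congrArg Complex.re henergy
  · unfold freeEnergy
    rw [congrArg Complex.re henergy]
    have hdiv : vnEntropy hρ.1 / β ≤ vnEntropy hpinch.1 / β := by gcongr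
    linarith
end
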